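/- Let E be an exact category with an admissible G-action (each F_g an exact autoequivalence). Then the collection of kernel-cokernel pairs in E^G whose image under the forgetful functor ω is a conflation in E defines the unique maximal exact structure on E^G for which ω is exact. If moreover |G| is invertible in E, then the projective objects of E^G are exactly the equivariant objects whose underlying object is projective in E, i.e., Proj(E^G) = (Proj E)^G, and dually Inj(E^G) = (Inj E)^G. -/

import Mathlib

open CategoryTheory Limits
universe v u
variable {G : Type*} [Group G] {A : Type u} [Category.{v} A]

structure GAction (G : Type*) [Group G] (A : Type u) [Category.{v} A] where
  F : G → A ⥤ A
  equiv : ∀ g, (F g).IsEquivalence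
  δ : ∀ g h : G, F h ⋙ F g ≅ F (h * g)
  cocycle : ∀ (g h l : G) (X : A),
    (F g).map ((δ h l).hom.app X) ≫ (δ g (l * h)).hom.app X ≫
      eqToHom (congrArg (fun m => (F m).obj X) (mul_assoc l h g)) =
    (δ g h).hom.app ((F l).obj X) ≫ (δ (h * g) l).hom.app X

structure EqObj (act : GAction G A) where
  obj : A
  lam : ∀ g : G, (act.F g).obj obj ≅ obj
  compat : ∀ g h : G,
    (act.F g).map (lam h).hom ≫ (lam g).hom =
      (act.δ g h).hom.app obj ≫ (lam (h * g)).hom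

namespace EqObj

variable {act : GAction G A}

@[ext]
structure EqHom (X Y : EqObj act) where
  f : X.obj ⟶ Y.obj
  comm : ∀ g : G, (act.F g).map f ≫ (Y.lam g).hom = (X.lam g).hom ≫ f

instance : Category (EqObj act) where
  Hom := EqHom
  id X := ⟨𝟙 X.obj, by intro g; simp⟩
  comp {X Y Z} u v := ⟨u.f ≫ v.f, by
    intro g
    rw [Functor.map_comp, Category.assoc, v.comm, ← Category.assoc, u.comm, Category.assoc]⟩

@[ext]
lemma hom_ext {X Y : EqObj act} {u v : X ⟶ Y} (h : u.f = v.f) : u = v := EqHom.ext h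

@[simp] lemma id_f (X : EqObj act) : (𝟙 X : X ⟶ X).f = 𝟙 X.obj := rfl
@[simp] lemma comp_f {X Y Z : EqObj act} (u : X ⟶ Y) (v : Y ⟶ Z) :
    (u ≫ v).f = u.f ≫ v.f := rfl

@[simps]
def forget (act : GAction G A) : EqObj act ⥤ A where
  obj X := X.obj
  map u := u.f

section Preadditive

variable [Preadditive A] [∀ g : G, (act.F g).Additive]

instance instAddHom (X Y : EqObj act) : Add (X ⟶ Y) :=
  ⟨fun u v => ⟨u.f + v.f, fun g => by
    simp [Preadditive.add_comp, Preadditive.comp_add, u.comm g, v.comm g]⟩⟩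

instance instZeroHom (X Y : EqObj act) : Zero (X ⟶ Y) :=
  ⟨⟨0, fun g => by simp⟩⟩

instance instNegHom (X Y : EqObj act) : Neg (X ⟶ Y) :=
  ⟨fun u => ⟨-u.f, fun g => by
    simp [Preadditive.neg_comp, Preadditive.comp_neg, u.comm g]⟩⟩

instance homAddCommGroup (X Y : EqObj act) : AddCommGroup (X ⟶ Y) where
  add := (· + ·)
  zero := 0
  neg := Neg.neg
  add_assoc := fun a b c => hom_ext (add_assoc a.f b.f c.f)
  zero_add := fun a => hom_ext (zero_add a.f)
  add_zero := fun a => hom_ext (add_zero a.f)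
  nsmul := nsmulRec
  zsmul := zsmulRec
  neg_add_cancel := fun a => hom_ext (neg_add_cancel a.f)
  add_comm := fun a b => hom_ext (add_comm a.f b.f)

instance : Preadditive (EqObj act) where
  homGroup := homAddCommGroup
  add_comp _ _ _ f f' g := hom_ext (Preadditive.add_comp _ _ _ f.f f'.f g.f)
  comp_add _ _ _ f g g' := hom_ext (Preadditive.comp_add _ _ _ f.f g.f g'.f)

@[simp] lemma add_f {X Y : EqObj act} (u v : X ⟶ Y) : (u + v).f = u.f + v.f := rfl
@[simp] lemma zero_f (X Y : EqObj act) : (0 : X ⟶ Y).f = 0 := rfl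

instance : (forget act).Additive where
  map_add := rfl

end Preadditive

end EqObj

/-- A functor is *separable* if the induced transformation on hom-sets admits a natural
retraction. -/
def CategoryTheory.Functor.Separable {C : Type*} [Category C] {B : Type*} [Category B]
    (F : C ⥤ B) : Prop :=
  ∃ Φ : ∀ X Y : C, (F.obj X ⟶ F.obj Y) → (X ⟶ Y),
    (∀ (X Y : C) (f : X ⟶ Y), Φ X Y (F.map f) = f) ∧
    (∀ (X' X Y Y' : C) (u : X' ⟶ X) (v : Y ⟶ Y') (h : F.obj X ⟶ F.obj Y),
      Φ X' Y' (F.map u ≫ h ≫ F.map v) = u ≫ Φ X Y h ≫ v)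

/-- `n` is invertible in an additive category `A` if every morphism is uniquely divisible
by `n`. -/
def NatInvertibleIn (n : ℕ) (A : Type u) [Category.{v} A] [Preadditive A] : Prop :=
  ∀ ⦃X Y : A⦄ (f : X ⟶ Y), ∃! g : X ⟶ Y, n • g = f

/-- A functor `A ⥤ A^G` *is the induction functor* if its composite with the forgetful
functor is naturally isomorphic to `X ↦ ⊕_{g ∈ G} F_g(X)`. -/
def IsInduction [Preadditive A] [HasFiniteBiproducts A] [Fintype G] (act : GAction G A)
    (Ind : A ⥤ EqObj act) : Prop :=
  ∃ iso : ∀ X : A, (EqObj.forget act).obj (Ind.obj X) ≅ ⨁ (fun g : G => (act.F g).obj X),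
    ∀ (X Y : A) (f : X ⟶ Y),
      (EqObj.forget act).map (Ind.map f) ≫ (iso Y).hom =
        (iso X).hom ≫ biproduct.map (fun g => (act.F g).map f)

section ExactCategories

variable (C : Type*) [Category C]

/-- A pair of composable morphisms. -/
structure Conflation where
  X : C
  Y : C
  Z : C
  i : X ⟶ Y
  d : Y ⟶ Z

variable {C}

/-- The image of a composable pair under a functor. -/
def Conflation.map {B : Type*} [Category B] (F : C ⥤ B) (c : Conflation C) :
    Conflation B :=
  ⟨F.obj c.X, F.obj c.Y, F.obj c.Z, F.map c.i, F.map c.d⟩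

variable [Preadditive C]

/-- `c` is a kernel-cokernel pair. -/
def IsKerCokerPair (c : Conflation C) : Prop :=
  ∃ w : c.i ≫ c.d = 0,
    Nonempty (IsLimit (KernelFork.ofι c.i w)) ∧
    Nonempty (IsColimit (CokernelCofork.ofπ c.d w))

/-- Isomorphism of composable pairs. -/
def ConflationIso (c c' : Conflation C) : Prop :=
  ∃ (eX : c.X ≅ c'.X) (eY : c.Y ≅ c'.Y) (eZ : c.Z ≅ c'.Z),
    c.i ≫ eY.hom = eX.hom ≫ c'.i ∧ c.d ≫ eZ.hom = eY.hom ≫ c'.d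

/-- `d` is a deflation for the class `S`. -/
def IsDeflationIn (S : Set (Conflation C)) {Y Z : C} (d : Y ⟶ Z) : Prop :=
  ∃ (X : C) (i : X ⟶ Y), Conflation.mk X Y Z i d ∈ S

/-- `i` is an inflation for the class `S`. -/
def IsInflationIn (S : Set (Conflation C)) {X Y : C} (i : X ⟶ Y) : Prop :=
  ∃ (Z : C) (d : Y ⟶ Z), Conflation.mk X Y Z i d ∈ S

/-- A Quillen exact structure, via Keller's axioms [Ex0], [Ex1], [Ex2], [Ex2ᵒᵖ]. -/
structure ExactStructure (C : Type*) [Category C] [Preadditive C] where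
  conflations : Set (Conflation C)
  kerCoker : ∀ c ∈ conflations, IsKerCokerPair c
  iso_closed : ∀ c ∈ conflations, ∀ c', ConflationIso c c' → c' ∈ conflations
  ex0 : ∀ Z : C, IsZero Z → IsDeflationIn conflations (𝟙 Z)
  ex1 : ∀ {Y Z W : C} (d : Y ⟶ Z) (d' : Z ⟶ W),
    IsDeflationIn conflations d → IsDeflationIn conflations d' →
    IsDeflationIn conflations (d ≫ d')
  ex2 : ∀ {Y Z Z' : C} (d : Y ⟶ Z), IsDeflationIn conflations d → ∀ f : Z' ⟶ Z,
    ∃ (Y' : C) (d' : Y' ⟶ Z') (f' : Y' ⟶ Y),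
      IsDeflationIn conflations d' ∧ IsPullback d' f' f d
  ex2op : ∀ {X Y X' : C} (i : X ⟶ Y), IsInflationIn conflations i → ∀ h : X ⟶ X',
    ∃ (Y' : C) (i' : X' ⟶ Y') (h' : Y ⟶ Y'),
      IsInflationIn conflations i' ∧ IsPushout i h h' i'

/-- `P` is projective relative to the class `S` of conflations. -/
def IsProjectiveIn (S : Set (Conflation C)) (P : C) : Prop :=
  ∀ {Y Z : C} (d : Y ⟶ Z), IsDeflationIn S d → ∀ f : P ⟶ Z, ∃ u : P ⟶ Y, u ≫ d = f

/-- `I` is injective relative to the class `S` of conflations. -/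
def IsInjectiveIn (S : Set (Conflation C)) (I : C) : Prop :=
  ∀ {X Y : C} (i : X ⟶ Y), IsInflationIn S i → ∀ f : X ⟶ I, ∃ u : Y ⟶ I, i ≫ u = f

end ExactCategories

section EquivariantProofs

open EqObj

variable [Preadditive A]

section EHelpers

variable {E : ExactStructure A}

lemma conf_w {c : Conflation A} (hc : c ∈ E.conflations) : c.i ≫ c.d = 0 :=
  (E.kerCoker c hc).choose

noncomputable def confKer {c : Conflation A} (hc : c ∈ E.conflations) :
    IsLimit (KernelFork.ofι c.i (conf_w hc)) :=
  (E.kerCoker c hc).choose_spec.1.some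

noncomputable def confCoker {c : Conflation A} (hc : c ∈ E.conflations) :
    IsColimit (CokernelCofork.ofπ c.d (conf_w hc)) :=
  (E.kerCoker c hc).choose_spec.2.some

lemma conf_mono {c : Conflation A} (hc : c ∈ E.conflations) : Mono c.i :=
  mono_of_isLimit_fork (confKer hc)

lemma conf_epi {c : Conflation A} (hc : c ∈ E.conflations) : Epi c.d :=
  epi_of_isColimit_cofork (confCoker hc)

noncomputable def kerLift {c : Conflation A} (hc : c ∈ E.conflations) {T : A}
    (t : T ⟶ c.Y) (ht : t ≫ c.d = 0) : T ⟶ c.X :=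
  (KernelFork.IsLimit.lift' (confKer hc) t ht).1

lemma kerLift_i {c : Conflation A} (hc : c ∈ E.conflations) {T : A}
    (t : T ⟶ c.Y) (ht : t ≫ c.d = 0) : kerLift hc t ht ≫ c.i = t :=
  (KernelFork.IsLimit.lift' (confKer hc) t ht).2

noncomputable def cokerDesc {c : Conflation A} (hc : c ∈ E.conflations) {T : A}
    (t : c.Y ⟶ T) (ht : c.i ≫ t = 0) : c.Z ⟶ T :=
  (CokernelCofork.IsColimit.desc' (confCoker hc) t ht).1

lemma d_cokerDesc {c : Conflation A} (hc : c ∈ E.conflations) {T : A}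
    (t : c.Y ⟶ T) (ht : c.i ≫ t = 0) : c.d ≫ cokerDesc hc t ht = t :=
  (CokernelCofork.IsColimit.desc' (confCoker hc) t ht).2

end EHelpers


set_option linter.unusedSectionVars false

section EquivariantCore

variable {act : GAction G A} [∀ g : G, (act.F g).Additive] {E : ExactStructure A}

/-- The candidate exact structure on the equivariant category. -/
def Sconf (act : GAction G A) [∀ g : G, (act.F g).Additive] (E : ExactStructure A) :
    Set (Conflation (EqObj act)) :=
  {c : Conflation (EqObj act) |
    IsKerCokerPair c ∧ c.map (EqObj.forget act) ∈ E.conflations}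

lemma EqObj.mono_of_f {X Y : EqObj act} (u : X ⟶ Y) (h : Mono u.f) : Mono u := by
  constructor
  intro T a b hab
  apply hom_ext
  have : a.f ≫ u.f = b.f ≫ u.f := by simpa using congrArg EqHom.f hab
  exact (cancel_mono u.f).1 this

lemma EqObj.epi_of_f {X Y : EqObj act} (u : X ⟶ Y) (h : Epi u.f) : Epi u := by
  constructor
  intro T a b hab
  apply hom_ext
  have : u.f ≫ a.f = u.f ≫ b.f := by simpa using congrArg EqHom.f hab
  exact (cancel_epi u.f).1 this

lemma comm_inv {X Y : EqObj act} (u : X ⟶ Y) (g : G) :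
    (X.lam g).inv ≫ (act.F g).map u.f = u.f ≫ (Y.lam g).inv := by
  rw [Iso.inv_comp_eq, ← Category.assoc, ← u.comm g, Category.assoc, Iso.hom_inv_id,
    Category.comp_id]

lemma kerCoker_of_forget {c : Conflation (EqObj act)}
    (hc : c.map (EqObj.forget act) ∈ E.conflations) : IsKerCokerPair c := by
  haveI mono_i : Mono c.i.f := conf_mono hc
  haveI epi_d : Epi c.d.f := conf_epi hc
  have w0 : c.i.f ≫ c.d.f = 0 := conf_w hc
  have w : c.i ≫ c.d = 0 := hom_ext (by simpa using w0)
  haveI : Mono c.i := EqObj.mono_of_f c.i mono_i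
  haveI : Epi c.d := EqObj.epi_of_f c.d epi_d
  refine ⟨w, ⟨?_⟩, ⟨?_⟩⟩
  · refine KernelFork.IsLimit.ofι' c.i w (fun {T} t ht => ?_)
    have ht0 : t.f ≫ c.d.f = 0 := by simpa using congrArg EqHom.f ht
    have hli : kerLift hc t.f ht0 ≫ c.i.f = t.f := kerLift_i hc t.f ht0
    refine ⟨⟨kerLift hc t.f ht0, fun g => ?_⟩, hom_ext hli⟩
    rw [← cancel_mono c.i.f]
    calc ((act.F g).map (kerLift hc t.f ht0) ≫ (c.X.lam g).hom) ≫ c.i.f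
        = (act.F g).map (kerLift hc t.f ht0) ≫ (act.F g).map c.i.f ≫ (c.Y.lam g).hom :=
          (Category.assoc _ _ _).trans
            (congrArg ((act.F g).map (kerLift hc t.f ht0) ≫ ·) (c.i.comm g).symm)
      _ = (act.F g).map (kerLift hc t.f ht0 ≫ c.i.f) ≫ (c.Y.lam g).hom :=
          ((act.F g).map_comp_assoc (kerLift hc t.f ht0) c.i.f (c.Y.lam g).hom).symm
      _ = (act.F g).map t.f ≫ (c.Y.lam g).hom := by rw [hli]
      _ = (T.lam g).hom ≫ t.f := t.comm g
      _ = (T.lam g).hom ≫ kerLift hc t.f ht0 ≫ c.i.f := by rw [hli]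
      _ = ((T.lam g).hom ≫ kerLift hc t.f ht0) ≫ c.i.f := (Category.assoc _ _ _).symm
  · refine CokernelCofork.IsColimit.ofπ' c.d w (fun {T} t ht => ?_)
    have ht0 : c.i.f ≫ t.f = 0 := by simpa using congrArg EqHom.f ht
    have hli : c.d.f ≫ cokerDesc hc t.f ht0 = t.f := d_cokerDesc hc t.f ht0
    refine ⟨⟨cokerDesc hc t.f ht0, fun g => ?_⟩, hom_ext (by simpa using hli)⟩
    haveI := act.equiv g
    haveI : Epi ((act.F g).map c.d.f) := inferInstance
    rw [← cancel_epi ((act.F g).map c.d.f)]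
    calc (act.F g).map c.d.f ≫ (act.F g).map (cokerDesc hc t.f ht0) ≫ (T.lam g).hom
        = (act.F g).map (c.d.f ≫ cokerDesc hc t.f ht0) ≫ (T.lam g).hom :=
          ((act.F g).map_comp_assoc c.d.f (cokerDesc hc t.f ht0) (T.lam g).hom).symm
      _ = (act.F g).map t.f ≫ (T.lam g).hom := by rw [hli]
      _ = (c.Y.lam g).hom ≫ t.f := t.comm g
      _ = (c.Y.lam g).hom ≫ c.d.f ≫ cokerDesc hc t.f ht0 := by rw [hli]
      _ = ((act.F g).map c.d.f ≫ (c.Z.lam g).hom) ≫ cokerDesc hc t.f ht0 :=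
          (Category.assoc _ _ _).symm.trans
            (congrArg (· ≫ cokerDesc hc t.f ht0) (c.d.comm g).symm)
      _ = (act.F g).map c.d.f ≫ (c.Z.lam g).hom ≫ cokerDesc hc t.f ht0 :=
          Category.assoc _ _ _

lemma mem_Sconf_iff {c : Conflation (EqObj act)} :
    c ∈ Sconf act E ↔ c.map (EqObj.forget act) ∈ E.conflations :=
  ⟨fun h => h.2, fun h => ⟨kerCoker_of_forget h, h⟩⟩

end EquivariantCore

section LiftLemmas

set_option linter.unusedSectionVars false

variable {act : GAction G A} [∀ g : G, (act.F g).Additive] {E : ExactStructure A}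
/-- If an equivariant morphism is a deflation on underlying objects, it is a deflation
in the equivariant category: the kernel carries a canonical equivariant structure. -/
lemma deflation_lift (hadm : ∀ (g : G), ∀ c ∈ E.conflations, c.map (act.F g) ∈ E.conflations)
    {Y W : EqObj act} (q : Y ⟶ W) (hq : IsDeflationIn E.conflations q.f) :
    IsDeflationIn (Sconf act E) q := by
  obtain ⟨K₀, i₀, hc⟩ := hq
  haveI mono_i : Mono i₀ := conf_mono hc
  have w0 : i₀ ≫ q.f = 0 := conf_w hc
  have hcg : ∀ g : G, Conflation.mk ((act.F g).obj K₀) ((act.F g).obj Y.obj)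
      ((act.F g).obj W.obj) ((act.F g).map i₀) ((act.F g).map q.f) ∈ E.conflations :=
    fun g => hadm g _ hc
  haveI mono_ig : ∀ g : G, Mono ((act.F g).map i₀) := fun g => conf_mono (hcg g)
  have hlam : ∀ g : G, {l : (act.F g).obj K₀ ⟶ K₀ //
      l ≫ i₀ = (act.F g).map i₀ ≫ (Y.lam g).hom} := by
    intro g
    refine ⟨kerLift hc ((act.F g).map i₀ ≫ (Y.lam g).hom) ?_, kerLift_i hc _ _⟩
    rw [Category.assoc, ← q.comm g, ← Category.assoc, ← Functor.map_comp, w0]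
    simp
  have hinv : ∀ g : G, {l : K₀ ⟶ (act.F g).obj K₀ //
      l ≫ (act.F g).map i₀ = i₀ ≫ (Y.lam g).inv} := by
    intro g
    refine ⟨kerLift (hcg g) (i₀ ≫ (Y.lam g).inv) ?_, kerLift_i (hcg g) _ _⟩
    rw [Category.assoc, comm_inv q g, ← Category.assoc, w0]
    simp
  have compat : ∀ g h : G, (act.F g).map (hlam h).1 ≫ (hlam g).1 =
      (act.δ g h).hom.app K₀ ≫ (hlam (h * g)).1 := by
    intro g h
    rw [← cancel_mono i₀]
    have nat := (act.δ g h).hom.naturality i₀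
    calc ((act.F g).map (hlam h).1 ≫ (hlam g).1) ≫ i₀
        = (act.F g).map (hlam h).1 ≫ (act.F g).map i₀ ≫ (Y.lam g).hom := by
          rw [Category.assoc, (hlam g).2]
      _ = (act.F g).map ((hlam h).1 ≫ i₀) ≫ (Y.lam g).hom := by
          rw [Functor.map_comp, Category.assoc]
      _ = (act.F g).map ((act.F h).map i₀ ≫ (Y.lam h).hom) ≫ (Y.lam g).hom := by
          rw [(hlam h).2]
      _ = (act.F g).map ((act.F h).map i₀) ≫ (act.F g).map (Y.lam h).hom ≫ (Y.lam g).hom := by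
          rw [Functor.map_comp, Category.assoc]
      _ = (act.F g).map ((act.F h).map i₀) ≫ (act.δ g h).hom.app Y.obj ≫
            (Y.lam (h * g)).hom := by rw [Y.compat g h]
      _ = ((act.δ g h).hom.app K₀ ≫ (act.F (h * g)).map i₀) ≫ (Y.lam (h * g)).hom := by
          rw [← Category.assoc]; exact congrArg (· ≫ (Y.lam (h * g)).hom) nat
      _ = (act.δ g h).hom.app K₀ ≫ (hlam (h * g)).1 ≫ i₀ := by
          rw [Category.assoc, (hlam (h * g)).2]
      _ = ((act.δ g h).hom.app K₀ ≫ (hlam (h * g)).1) ≫ i₀ := by rw [Category.assoc]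
  refine ⟨⟨K₀, fun g => ⟨(hlam g).1, (hinv g).1, ?_, ?_⟩,
      fun g h => compat g h⟩, ⟨i₀, fun g => ((hlam g).2).symm⟩, kerCoker_of_forget hc, hc⟩
  · rw [← cancel_mono ((act.F g).map i₀), Category.assoc, (hinv g).2, ← Category.assoc,
      (hlam g).2]
    simp
  · rw [← cancel_mono i₀, Category.assoc, (hlam g).2, ← Category.assoc, (hinv g).2]
    simp

/-- Dual statement: an equivariant morphism which is an inflation on underlying objects
is an inflation in the equivariant category. -/
lemma inflation_lift (hadm : ∀ (g : G), ∀ c ∈ E.conflations, c.map (act.F g) ∈ E.conflations)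
    {X Y : EqObj act} (q : X ⟶ Y) (hq : IsInflationIn E.conflations q.f) :
    IsInflationIn (Sconf act E) q := by
  obtain ⟨Z₀, d₀, hc⟩ := hq
  haveI epi_d : Epi d₀ := conf_epi hc
  have w0 : q.f ≫ d₀ = 0 := conf_w hc
  have hcg : ∀ g : G, Conflation.mk ((act.F g).obj X.obj) ((act.F g).obj Y.obj)
      ((act.F g).obj Z₀) ((act.F g).map q.f) ((act.F g).map d₀) ∈ E.conflations :=
    fun g => hadm g _ hc
  haveI epi_dg : ∀ g : G, Epi ((act.F g).map d₀) := fun g => conf_epi (hcg g)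
  haveI epi_dgh : ∀ g h : G, Epi ((act.F g).map ((act.F h).map d₀)) := by
    intro g h
    haveI := act.equiv g
    infer_instance
  have hlam : ∀ g : G, {l : (act.F g).obj Z₀ ⟶ Z₀ //
      (act.F g).map d₀ ≫ l = (Y.lam g).hom ≫ d₀} := by
    intro g
    refine ⟨cokerDesc (hcg g) ((Y.lam g).hom ≫ d₀) ?_, d_cokerDesc (hcg g) _ _⟩
    rw [← Category.assoc, q.comm g, Category.assoc, w0]
    simp
  have hinv : ∀ g : G, {l : Z₀ ⟶ (act.F g).obj Z₀ //
      d₀ ≫ l = (Y.lam g).inv ≫ (act.F g).map d₀} := by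
    intro g
    refine ⟨cokerDesc hc ((Y.lam g).inv ≫ (act.F g).map d₀) ?_, d_cokerDesc hc _ _⟩
    rw [← Category.assoc, ← comm_inv q g, Category.assoc, ← Functor.map_comp, w0]
    simp
  have compat : ∀ g h : G, (act.F g).map (hlam h).1 ≫ (hlam g).1 =
      (act.δ g h).hom.app Z₀ ≫ (hlam (h * g)).1 := by
    intro g h
    rw [← cancel_epi ((act.F g).map ((act.F h).map d₀))]
    have nat := (act.δ g h).hom.naturality d₀
    calc (act.F g).map ((act.F h).map d₀) ≫ (act.F g).map (hlam h).1 ≫ (hlam g).1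
        = (act.F g).map ((act.F h).map d₀ ≫ (hlam h).1) ≫ (hlam g).1 := by
          rw [Functor.map_comp, Category.assoc]
      _ = (act.F g).map ((Y.lam h).hom ≫ d₀) ≫ (hlam g).1 := by rw [(hlam h).2]
      _ = (act.F g).map (Y.lam h).hom ≫ (act.F g).map d₀ ≫ (hlam g).1 := by
          rw [Functor.map_comp, Category.assoc]
      _ = (act.F g).map (Y.lam h).hom ≫ (Y.lam g).hom ≫ d₀ := by rw [(hlam g).2]
      _ = ((act.F g).map (Y.lam h).hom ≫ (Y.lam g).hom) ≫ d₀ := by rw [Category.assoc]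
      _ = ((act.δ g h).hom.app Y.obj ≫ (Y.lam (h * g)).hom) ≫ d₀ := by rw [Y.compat g h]
      _ = (act.δ g h).hom.app Y.obj ≫ (act.F (h * g)).map d₀ ≫ (hlam (h * g)).1 := by
          rw [Category.assoc, (hlam (h * g)).2]
      _ = ((act.δ g h).hom.app Y.obj ≫ (act.F (h * g)).map d₀) ≫ (hlam (h * g)).1 := by
          rw [Category.assoc]
      _ = ((act.F g).map ((act.F h).map d₀) ≫ (act.δ g h).hom.app Z₀) ≫ (hlam (h * g)).1 := by
          rw [← nat]; rfl
      _ = (act.F g).map ((act.F h).map d₀) ≫ (act.δ g h).hom.app Z₀ ≫ (hlam (h * g)).1 := by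
          rw [Category.assoc]
  refine ⟨⟨Z₀, fun g => ⟨(hlam g).1, (hinv g).1, ?_, ?_⟩,
      fun g h => compat g h⟩, ⟨d₀, fun g => (hlam g).2⟩, kerCoker_of_forget hc, hc⟩
  · rw [← cancel_epi ((act.F g).map d₀), ← Category.assoc, (hlam g).2, Category.assoc,
      (hinv g).2]
    simp
  · rw [← cancel_epi d₀, ← Category.assoc, (hinv g).2, Category.assoc, (hlam g).2]
    simp

end LiftLemmas

section Axioms

set_option linter.unusedSectionVars false

variable {act : GAction G A} [∀ g : G, (act.F g).Additive] {E : ExactStructure A}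

lemma S_iso_closed {c : Conflation (EqObj act)} (hc : c ∈ Sconf act E)
    (c' : Conflation (EqObj act)) (hiso : ConflationIso c c') : c' ∈ Sconf act E := by
  obtain ⟨eX, eY, eZ, h1, h2⟩ := hiso
  refine mem_Sconf_iff.2 (E.iso_closed _ hc.2 _ ?_)
  exact ⟨(EqObj.forget act).mapIso eX, (EqObj.forget act).mapIso eY, (EqObj.forget act).mapIso eZ,
    congrArg EqObj.EqHom.f h1, congrArg EqObj.EqHom.f h2⟩

lemma S_ex0 (hadm : ∀ (g : G), ∀ c ∈ E.conflations, c.map (act.F g) ∈ E.conflations)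
    (Z : EqObj act) (hZ : IsZero Z) : IsDeflationIn (Sconf act E) (𝟙 Z) := by
  have h1 : (𝟙 Z.obj : Z.obj ⟶ Z.obj) = 0 := by
    have : (𝟙 Z : Z ⟶ Z) = 0 := hZ.eq_of_src _ _
    simpa using congrArg EqObj.EqHom.f this
  exact deflation_lift hadm (𝟙 Z) (E.ex0 Z.obj ((IsZero.iff_id_eq_zero Z.obj).2 h1))

lemma S_ex1 (hadm : ∀ (g : G), ∀ c ∈ E.conflations, c.map (act.F g) ∈ E.conflations)
    {Y Z W : EqObj act} (d : Y ⟶ Z) (d' : Z ⟶ W) (h : IsDeflationIn (Sconf act E) d)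
    (h' : IsDeflationIn (Sconf act E) d') : IsDeflationIn (Sconf act E) (d ≫ d') := by
  obtain ⟨X, i, hX⟩ := h
  obtain ⟨X', i', hX'⟩ := h'
  exact deflation_lift hadm (d ≫ d')
    (E.ex1 d.f d'.f ⟨X.obj, i.f, hX.2⟩ ⟨X'.obj, i'.f, hX'.2⟩)

lemma S_ex2 (hadm : ∀ (g : G), ∀ c ∈ E.conflations, c.map (act.F g) ∈ E.conflations)
    {Y Z Z' : EqObj act} (d : Y ⟶ Z) (hd : IsDeflationIn (Sconf act E) d) (f : Z' ⟶ Z) :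
    ∃ (Y' : EqObj act) (d' : Y' ⟶ Z') (f' : Y' ⟶ Y),
      IsDeflationIn (Sconf act E) d' ∧ IsPullback d' f' f d := by
  obtain ⟨X, i, hXS⟩ := hd
  have hdE : IsDeflationIn E.conflations d.f := ⟨X.obj, i.f, hXS.2⟩
  obtain ⟨Y'₀, d'₀, f'₀, hd'E, hpb⟩ := E.ex2 d.f hdE f.f
  haveI : ∀ g : G, (act.F g).IsEquivalence := act.equiv
  have hpbg : ∀ g : G, IsPullback ((act.F g).map d'₀) ((act.F g).map f'₀)
      ((act.F g).map f.f) ((act.F g).map d.f) := fun g => hpb.map (act.F g)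
  have pf : ∀ g : G, ((act.F g).map d'₀ ≫ (Z'.lam g).hom) ≫ f.f =
      ((act.F g).map f'₀ ≫ (Y.lam g).hom) ≫ d.f := by
    intro g
    calc ((act.F g).map d'₀ ≫ (Z'.lam g).hom) ≫ f.f
        = (act.F g).map d'₀ ≫ (act.F g).map f.f ≫ (Z.lam g).hom := by
          rw [Category.assoc, f.comm g]
      _ = (act.F g).map (d'₀ ≫ f.f) ≫ (Z.lam g).hom := by rw [Functor.map_comp, Category.assoc]
      _ = (act.F g).map (f'₀ ≫ d.f) ≫ (Z.lam g).hom := by rw [hpb.w]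
      _ = (act.F g).map f'₀ ≫ (act.F g).map d.f ≫ (Z.lam g).hom := by
          rw [Functor.map_comp, Category.assoc]
      _ = ((act.F g).map f'₀ ≫ (Y.lam g).hom) ≫ d.f := by rw [d.comm g, Category.assoc]
  have pf2 : ∀ g : G, (d'₀ ≫ (Z'.lam g).inv) ≫ (act.F g).map f.f =
      (f'₀ ≫ (Y.lam g).inv) ≫ (act.F g).map d.f := by
    intro g
    rw [Category.assoc, comm_inv f g, Category.assoc, comm_inv d g, ← Category.assoc,
      ← Category.assoc, hpb.w]
  let lamhom : ∀ g : G, (act.F g).obj Y'₀ ⟶ Y'₀ := fun g =>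
    hpb.lift ((act.F g).map d'₀ ≫ (Z'.lam g).hom) ((act.F g).map f'₀ ≫ (Y.lam g).hom) (pf g)
  let laminv : ∀ g : G, Y'₀ ⟶ (act.F g).obj Y'₀ := fun g =>
    (hpbg g).lift (d'₀ ≫ (Z'.lam g).inv) (f'₀ ≫ (Y.lam g).inv) (pf2 g)
  have hom_fst : ∀ g, lamhom g ≫ d'₀ = (act.F g).map d'₀ ≫ (Z'.lam g).hom := fun g =>
    hpb.lift_fst _ _ _
  have hom_snd : ∀ g, lamhom g ≫ f'₀ = (act.F g).map f'₀ ≫ (Y.lam g).hom := fun g =>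
    hpb.lift_snd _ _ _
  have inv_fst : ∀ g, laminv g ≫ (act.F g).map d'₀ = d'₀ ≫ (Z'.lam g).inv := fun g =>
    (hpbg g).lift_fst _ _ _
  have inv_snd : ∀ g, laminv g ≫ (act.F g).map f'₀ = f'₀ ≫ (Y.lam g).inv := fun g =>
    (hpbg g).lift_snd _ _ _
  have compat : ∀ g h : G, (act.F g).map (lamhom h) ≫ lamhom g =
      (act.δ g h).hom.app Y'₀ ≫ lamhom (h * g) := by
    intro g h
    apply hpb.hom_ext
    · calc ((act.F g).map (lamhom h) ≫ lamhom g) ≫ d'₀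
          = (act.F g).map (lamhom h) ≫ (act.F g).map d'₀ ≫ (Z'.lam g).hom := by
            rw [Category.assoc, hom_fst g]
        _ = (act.F g).map (lamhom h ≫ d'₀) ≫ (Z'.lam g).hom := by
            rw [Functor.map_comp, Category.assoc]
        _ = (act.F g).map ((act.F h).map d'₀ ≫ (Z'.lam h).hom) ≫ (Z'.lam g).hom := by
            rw [hom_fst h]
        _ = (act.F g).map ((act.F h).map d'₀) ≫
              ((act.F g).map (Z'.lam h).hom ≫ (Z'.lam g).hom) := by
            rw [Functor.map_comp, Category.assoc]
        _ = (act.F g).map ((act.F h).map d'₀) ≫ (act.δ g h).hom.app Z'.obj ≫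
              (Z'.lam (h * g)).hom := by rw [Z'.compat g h]
        _ = ((act.δ g h).hom.app Y'₀ ≫ (act.F (h * g)).map d'₀) ≫ (Z'.lam (h * g)).hom := by
            rw [← Category.assoc]
            exact congrArg (· ≫ (Z'.lam (h * g)).hom) ((act.δ g h).hom.naturality d'₀)
        _ = (act.δ g h).hom.app Y'₀ ≫ lamhom (h * g) ≫ d'₀ := by
            rw [Category.assoc, hom_fst (h * g)]
        _ = ((act.δ g h).hom.app Y'₀ ≫ lamhom (h * g)) ≫ d'₀ := by rw [Category.assoc]
    · calc ((act.F g).map (lamhom h) ≫ lamhom g) ≫ f'₀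
          = (act.F g).map (lamhom h) ≫ (act.F g).map f'₀ ≫ (Y.lam g).hom := by
            rw [Category.assoc, hom_snd g]
        _ = (act.F g).map (lamhom h ≫ f'₀) ≫ (Y.lam g).hom := by
            rw [Functor.map_comp, Category.assoc]
        _ = (act.F g).map ((act.F h).map f'₀ ≫ (Y.lam h).hom) ≫ (Y.lam g).hom := by
            rw [hom_snd h]
        _ = (act.F g).map ((act.F h).map f'₀) ≫
              ((act.F g).map (Y.lam h).hom ≫ (Y.lam g).hom) := by
            rw [Functor.map_comp, Category.assoc]
        _ = (act.F g).map ((act.F h).map f'₀) ≫ (act.δ g h).hom.app Y.obj ≫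
              (Y.lam (h * g)).hom := by rw [Y.compat g h]
        _ = ((act.δ g h).hom.app Y'₀ ≫ (act.F (h * g)).map f'₀) ≫ (Y.lam (h * g)).hom := by
            rw [← Category.assoc]
            exact congrArg (· ≫ (Y.lam (h * g)).hom) ((act.δ g h).hom.naturality f'₀)
        _ = (act.δ g h).hom.app Y'₀ ≫ lamhom (h * g) ≫ f'₀ := by
            rw [Category.assoc, hom_snd (h * g)]
        _ = ((act.δ g h).hom.app Y'₀ ≫ lamhom (h * g)) ≫ f'₀ := by rw [Category.assoc]
  let Y' : EqObj act :=
    { obj := Y'₀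
      lam := fun g =>
        { hom := lamhom g
          inv := laminv g
          hom_inv_id := by
            apply (hpbg g).hom_ext
            · rw [Category.assoc, inv_fst g, ← Category.assoc, hom_fst g, Category.assoc,
                Iso.hom_inv_id, Category.comp_id, Category.id_comp]
            · rw [Category.assoc, inv_snd g, ← Category.assoc, hom_snd g, Category.assoc,
                Iso.hom_inv_id, Category.comp_id, Category.id_comp]
          inv_hom_id := by
            apply hpb.hom_ext
            · rw [Category.assoc, hom_fst g, ← Category.assoc, inv_fst g, Category.assoc,
                Iso.inv_hom_id, Category.comp_id, Category.id_comp]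
            · rw [Category.assoc, hom_snd g, ← Category.assoc, inv_snd g, Category.assoc,
                Iso.inv_hom_id, Category.comp_id, Category.id_comp] }
      compat := fun g h => compat g h }
  let d' : Y' ⟶ Z' := ⟨d'₀, fun g => (hom_fst g).symm⟩
  let f' : Y' ⟶ Y := ⟨f'₀, fun g => (hom_snd g).symm⟩
  have weq : d' ≫ f = f' ≫ d := EqObj.hom_ext hpb.w
  refine ⟨Y', d', f', deflation_lift hadm d' hd'E, ?_⟩
  have lift_comm : ∀ (s : PullbackCone f d),
      ∀ g : G, (act.F g).map (hpb.lift s.fst.f s.snd.f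
          (by simpa using congrArg EqObj.EqHom.f s.condition)) ≫ lamhom g =
        (s.pt.lam g).hom ≫ hpb.lift s.fst.f s.snd.f
          (by simpa using congrArg EqObj.EqHom.f s.condition) := by
    intro s g
    set l₀ := hpb.lift s.fst.f s.snd.f (by simpa using congrArg EqObj.EqHom.f s.condition)
      with hl₀
    apply hpb.hom_ext
    · rw [Category.assoc, hom_fst g, ← Category.assoc, ← Functor.map_comp,
        hpb.lift_fst, Category.assoc, hpb.lift_fst, s.fst.comm g]
    · rw [Category.assoc, hom_snd g, ← Category.assoc, ← Functor.map_comp,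
        hpb.lift_snd, Category.assoc, hpb.lift_snd, s.snd.comm g]
  exact IsPullback.of_isLimit (PullbackCone.IsLimit.mk weq
    (fun s => ⟨hpb.lift s.fst.f s.snd.f
        (by simpa using congrArg EqObj.EqHom.f s.condition), lift_comm s⟩)
    (fun s => EqObj.hom_ext (hpb.lift_fst _ _ _))
    (fun s => EqObj.hom_ext (hpb.lift_snd _ _ _))
    (fun s m hm1 hm2 => EqObj.hom_ext (hpb.hom_ext
      (by rw [hpb.lift_fst]; simpa using congrArg EqObj.EqHom.f hm1)
      (by rw [hpb.lift_snd]; simpa using congrArg EqObj.EqHom.f hm2))))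

end Axioms

section AxiomsOp

set_option linter.unusedSectionVars false

variable {act : GAction G A} [∀ g : G, (act.F g).Additive] {E : ExactStructure A}

lemma S_ex2op (hadm : ∀ (g : G), ∀ c ∈ E.conflations, c.map (act.F g) ∈ E.conflations)
    {X Y X' : EqObj act} (i : X ⟶ Y) (hi : IsInflationIn (Sconf act E) i) (h : X ⟶ X') :
    ∃ (Y' : EqObj act) (i' : X' ⟶ Y') (h' : Y ⟶ Y'),
      IsInflationIn (Sconf act E) i' ∧ IsPushout i h h' i' := by
  obtain ⟨Z, d, hZS⟩ := hi
  have hiE : IsInflationIn E.conflations i.f := ⟨Z.obj, d.f, hZS.2⟩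
  obtain ⟨Y'₀, i'₀, h'₀, hi'E, hpo⟩ := E.ex2op i.f hiE h.f
  haveI : ∀ g : G, (act.F g).IsEquivalence := act.equiv
  have hpog : ∀ g : G, IsPushout ((act.F g).map i.f) ((act.F g).map h.f)
      ((act.F g).map h'₀) ((act.F g).map i'₀) := fun g => hpo.map (act.F g)
  have hpogh : ∀ g h₁ : G, IsPushout ((act.F g).map ((act.F h₁).map i.f))
      ((act.F g).map ((act.F h₁).map h.f)) ((act.F g).map ((act.F h₁).map h'₀))
      ((act.F g).map ((act.F h₁).map i'₀)) := fun g h₁ => (hpo.map (act.F h₁)).map (act.F g)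
  have pf : ∀ g : G, (act.F g).map i.f ≫ (Y.lam g).hom ≫ h'₀ =
      (act.F g).map h.f ≫ (X'.lam g).hom ≫ i'₀ := by
    intro g
    calc (act.F g).map i.f ≫ (Y.lam g).hom ≫ h'₀
        = ((act.F g).map i.f ≫ (Y.lam g).hom) ≫ h'₀ := by rw [Category.assoc]
      _ = ((X.lam g).hom ≫ i.f) ≫ h'₀ := by rw [i.comm g]
      _ = (X.lam g).hom ≫ i.f ≫ h'₀ := by rw [Category.assoc]
      _ = (X.lam g).hom ≫ h.f ≫ i'₀ := by rw [hpo.w]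
      _ = ((X.lam g).hom ≫ h.f) ≫ i'₀ := by rw [Category.assoc]
      _ = ((act.F g).map h.f ≫ (X'.lam g).hom) ≫ i'₀ := by rw [h.comm g]
      _ = (act.F g).map h.f ≫ (X'.lam g).hom ≫ i'₀ := by rw [Category.assoc]
  have pf2 : ∀ g : G, i.f ≫ (Y.lam g).inv ≫ (act.F g).map h'₀ =
      h.f ≫ (X'.lam g).inv ≫ (act.F g).map i'₀ := by
    intro g
    calc i.f ≫ (Y.lam g).inv ≫ (act.F g).map h'₀
        = (i.f ≫ (Y.lam g).inv) ≫ (act.F g).map h'₀ := by rw [Category.assoc]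
      _ = ((X.lam g).inv ≫ (act.F g).map i.f) ≫ (act.F g).map h'₀ := by rw [comm_inv i g]
      _ = (X.lam g).inv ≫ (act.F g).map (i.f ≫ h'₀) := by
          rw [Category.assoc, Functor.map_comp]
      _ = (X.lam g).inv ≫ (act.F g).map (h.f ≫ i'₀) := by rw [hpo.w]
      _ = ((X.lam g).inv ≫ (act.F g).map h.f) ≫ (act.F g).map i'₀ := by
          rw [Category.assoc, Functor.map_comp]
      _ = (h.f ≫ (X'.lam g).inv) ≫ (act.F g).map i'₀ := by rw [comm_inv h g]
      _ = h.f ≫ (X'.lam g).inv ≫ (act.F g).map i'₀ := by rw [Category.assoc]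
  let lamhom : ∀ g : G, (act.F g).obj Y'₀ ⟶ Y'₀ := fun g =>
    (hpog g).desc ((Y.lam g).hom ≫ h'₀) ((X'.lam g).hom ≫ i'₀) (pf g)
  let laminv : ∀ g : G, Y'₀ ⟶ (act.F g).obj Y'₀ := fun g =>
    hpo.desc ((Y.lam g).inv ≫ (act.F g).map h'₀) ((X'.lam g).inv ≫ (act.F g).map i'₀) (pf2 g)
  have hom_inl : ∀ g, (act.F g).map h'₀ ≫ lamhom g = (Y.lam g).hom ≫ h'₀ := fun g =>
    (hpog g).inl_desc _ _ _
  have hom_inr : ∀ g, (act.F g).map i'₀ ≫ lamhom g = (X'.lam g).hom ≫ i'₀ := fun g =>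
    (hpog g).inr_desc _ _ _
  have inv_inl : ∀ g, h'₀ ≫ laminv g = (Y.lam g).inv ≫ (act.F g).map h'₀ := fun g =>
    hpo.inl_desc _ _ _
  have inv_inr : ∀ g, i'₀ ≫ laminv g = (X'.lam g).inv ≫ (act.F g).map i'₀ := fun g =>
    hpo.inr_desc _ _ _
  have compat : ∀ g h₁ : G, (act.F g).map (lamhom h₁) ≫ lamhom g =
      (act.δ g h₁).hom.app Y'₀ ≫ lamhom (h₁ * g) := by
    intro g h₁
    apply (hpogh g h₁).hom_ext
    · calc (act.F g).map ((act.F h₁).map h'₀) ≫ (act.F g).map (lamhom h₁) ≫ lamhom g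
          = (act.F g).map ((act.F h₁).map h'₀ ≫ lamhom h₁) ≫ lamhom g := by
            rw [Functor.map_comp, Category.assoc]
        _ = (act.F g).map ((Y.lam h₁).hom ≫ h'₀) ≫ lamhom g := by rw [hom_inl h₁]
        _ = (act.F g).map (Y.lam h₁).hom ≫ (act.F g).map h'₀ ≫ lamhom g := by
            rw [Functor.map_comp, Category.assoc]
        _ = (act.F g).map (Y.lam h₁).hom ≫ (Y.lam g).hom ≫ h'₀ := by rw [hom_inl g]
        _ = ((act.F g).map (Y.lam h₁).hom ≫ (Y.lam g).hom) ≫ h'₀ := by rw [Category.assoc]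
        _ = ((act.δ g h₁).hom.app Y.obj ≫ (Y.lam (h₁ * g)).hom) ≫ h'₀ := by
            rw [Y.compat g h₁]
        _ = (act.δ g h₁).hom.app Y.obj ≫ (act.F (h₁ * g)).map h'₀ ≫ lamhom (h₁ * g) := by
            rw [Category.assoc, hom_inl (h₁ * g)]
        _ = ((act.δ g h₁).hom.app Y.obj ≫ (act.F (h₁ * g)).map h'₀) ≫ lamhom (h₁ * g) := by
            rw [Category.assoc]
        _ = ((act.F g).map ((act.F h₁).map h'₀) ≫ (act.δ g h₁).hom.app Y'₀) ≫
              lamhom (h₁ * g) := by rw [← (act.δ g h₁).hom.naturality h'₀]; rfl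
        _ = (act.F g).map ((act.F h₁).map h'₀) ≫ (act.δ g h₁).hom.app Y'₀ ≫
              lamhom (h₁ * g) := by rw [Category.assoc]
    · calc (act.F g).map ((act.F h₁).map i'₀) ≫ (act.F g).map (lamhom h₁) ≫ lamhom g
          = (act.F g).map ((act.F h₁).map i'₀ ≫ lamhom h₁) ≫ lamhom g := by
            rw [Functor.map_comp, Category.assoc]
        _ = (act.F g).map ((X'.lam h₁).hom ≫ i'₀) ≫ lamhom g := by rw [hom_inr h₁]
        _ = (act.F g).map (X'.lam h₁).hom ≫ (act.F g).map i'₀ ≫ lamhom g := by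
            rw [Functor.map_comp, Category.assoc]
        _ = (act.F g).map (X'.lam h₁).hom ≫ (X'.lam g).hom ≫ i'₀ := by rw [hom_inr g]
        _ = ((act.F g).map (X'.lam h₁).hom ≫ (X'.lam g).hom) ≫ i'₀ := by rw [Category.assoc]
        _ = ((act.δ g h₁).hom.app X'.obj ≫ (X'.lam (h₁ * g)).hom) ≫ i'₀ := by
            rw [X'.compat g h₁]
        _ = (act.δ g h₁).hom.app X'.obj ≫ (act.F (h₁ * g)).map i'₀ ≫ lamhom (h₁ * g) := by
            rw [Category.assoc, hom_inr (h₁ * g)]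
        _ = ((act.δ g h₁).hom.app X'.obj ≫ (act.F (h₁ * g)).map i'₀) ≫ lamhom (h₁ * g) := by
            rw [Category.assoc]
        _ = ((act.F g).map ((act.F h₁).map i'₀) ≫ (act.δ g h₁).hom.app Y'₀) ≫
              lamhom (h₁ * g) := by rw [← (act.δ g h₁).hom.naturality i'₀]; rfl
        _ = (act.F g).map ((act.F h₁).map i'₀) ≫ (act.δ g h₁).hom.app Y'₀ ≫
              lamhom (h₁ * g) := by rw [Category.assoc]
  let Y' : EqObj act :=
    { obj := Y'₀
      lam := fun g =>
        { hom := lamhom g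
          inv := laminv g
          hom_inv_id := by
            apply (hpog g).hom_ext
            · rw [← Category.assoc, hom_inl g, Category.assoc, inv_inl g, ← Category.assoc,
                Iso.hom_inv_id, Category.id_comp, Category.comp_id]
            · rw [← Category.assoc, hom_inr g, Category.assoc, inv_inr g, ← Category.assoc,
                Iso.hom_inv_id, Category.id_comp, Category.comp_id]
          inv_hom_id := by
            apply hpo.hom_ext
            · rw [← Category.assoc, inv_inl g, Category.assoc, hom_inl g, ← Category.assoc,
                Iso.inv_hom_id, Category.id_comp, Category.comp_id]
            · rw [← Category.assoc, inv_inr g, Category.assoc, hom_inr g, ← Category.assoc,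
                Iso.inv_hom_id, Category.id_comp, Category.comp_id] }
      compat := fun g h₁ => compat g h₁ }
  let i' : X' ⟶ Y' := ⟨i'₀, fun g => hom_inr g⟩
  let h' : Y ⟶ Y' := ⟨h'₀, fun g => hom_inl g⟩
  have weq : i ≫ h' = h ≫ i' := EqObj.hom_ext hpo.w
  refine ⟨Y', i', h', inflation_lift hadm i' hi'E, ?_⟩
  have desc_comm : ∀ (s : PushoutCocone i h),
      ∀ g : G, (act.F g).map (hpo.desc s.inl.f s.inr.f
          (by simpa using congrArg EqObj.EqHom.f s.condition)) ≫ (s.pt.lam g).hom =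
        lamhom g ≫ hpo.desc s.inl.f s.inr.f
          (by simpa using congrArg EqObj.EqHom.f s.condition) := by
    intro s g
    apply (hpog g).hom_ext
    · rw [← Category.assoc, ← Functor.map_comp, hpo.inl_desc, ← Category.assoc, hom_inl g,
        Category.assoc, hpo.inl_desc, s.inl.comm g]
    · rw [← Category.assoc, ← Functor.map_comp, hpo.inr_desc, ← Category.assoc, hom_inr g,
        Category.assoc, hpo.inr_desc, s.inr.comm g]
  exact IsPushout.of_isColimit (PushoutCocone.IsColimit.mk weq
    (fun s => ⟨hpo.desc s.inl.f s.inr.f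
        (by simpa using congrArg EqObj.EqHom.f s.condition), desc_comm s⟩)
    (fun s => EqObj.hom_ext (hpo.inl_desc _ _ _))
    (fun s => EqObj.hom_ext (hpo.inr_desc _ _ _))
    (fun s m hm1 hm2 => EqObj.hom_ext (hpo.hom_ext
      (by rw [hpo.inl_desc]; simpa using congrArg EqObj.EqHom.f hm1)
      (by rw [hpo.inr_desc]; simpa using congrArg EqObj.EqHom.f hm2))))

end AxiomsOp

section Averaging

set_option linter.unusedSectionVars false

variable {act : GAction G A} [∀ g : G, (act.F g).Additive] {E : ExactStructure A}

lemma compat_inv (X : EqObj act) (h g : G) :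
    (act.F h).map (X.lam g).inv ≫ (act.δ h g).hom.app X.obj =
      (X.lam h).hom ≫ (X.lam (g * h)).inv := by
  rw [← cancel_mono (X.lam (g * h)).hom, Category.assoc, Category.assoc, ← X.compat h g,
    Iso.inv_hom_id, Category.comp_id, ← Category.assoc, ← Functor.map_comp, Iso.inv_hom_id]
  simp

variable [Fintype G]

lemma average_hom (hinv : NatInvertibleIn (Fintype.card G) A) (X1 X2 : EqObj act)
    (u₀ : X1.obj ⟶ X2.obj) :
    ∃ u : X1 ⟶ X2, (Fintype.card G) • u.f =
      ∑ g : G, (X1.lam g).inv ≫ (act.F g).map u₀ ≫ (X2.lam g).hom := by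
  set σ : X1.obj ⟶ X2.obj := ∑ g : G, (X1.lam g).inv ≫ (act.F g).map u₀ ≫ (X2.lam g).hom
    with hσ
  obtain ⟨u, hu, -⟩ := hinv σ
  have equi : ∀ h : G, (act.F h).map σ ≫ (X2.lam h).hom = (X1.lam h).hom ≫ σ := by
    intro h
    rw [hσ, Functor.map_sum, Preadditive.sum_comp, Preadditive.comp_sum]
    refine Fintype.sum_equiv (Equiv.mulRight h) _ _ (fun g => ?_)
    simp only [Equiv.coe_mulRight]
    rw [Functor.map_comp, Functor.map_comp]
    calc ((act.F h).map (X1.lam g).inv ≫ (act.F h).map ((act.F g).map u₀) ≫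
            (act.F h).map (X2.lam g).hom) ≫ (X2.lam h).hom
        = (act.F h).map (X1.lam g).inv ≫ (act.F h).map ((act.F g).map u₀) ≫
            ((act.F h).map (X2.lam g).hom ≫ (X2.lam h).hom) := by
          simp only [Category.assoc]
      _ = (act.F h).map (X1.lam g).inv ≫ (act.F h).map ((act.F g).map u₀) ≫
            (act.δ h g).hom.app X2.obj ≫ (X2.lam (g * h)).hom := by rw [X2.compat h g]
      _ = (act.F h).map (X1.lam g).inv ≫ ((act.δ h g).hom.app X1.obj ≫
            (act.F (g * h)).map u₀) ≫ (X2.lam (g * h)).hom := by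
          rw [← Category.assoc ((act.F h).map ((act.F g).map u₀)),
            ← (act.δ h g).hom.naturality u₀]
          rfl
      _ = ((act.F h).map (X1.lam g).inv ≫ (act.δ h g).hom.app X1.obj) ≫
            (act.F (g * h)).map u₀ ≫ (X2.lam (g * h)).hom := by
          simp only [Category.assoc]
      _ = ((X1.lam h).hom ≫ (X1.lam (g * h)).inv) ≫
            (act.F (g * h)).map u₀ ≫ (X2.lam (g * h)).hom := by rw [compat_inv X1 h g]
      _ = (X1.lam h).hom ≫ (X1.lam (g * h)).inv ≫
            (act.F (g * h)).map u₀ ≫ (X2.lam (g * h)).hom := by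
          simp only [Category.assoc]
  refine ⟨⟨u, fun h => ?_⟩, hu⟩
  obtain ⟨w, -, hw⟩ := hinv ((X1.lam h).hom ≫ σ)
  have h1 : (Fintype.card G) • ((act.F h).map u ≫ (X2.lam h).hom) = (X1.lam h).hom ≫ σ := by
    rw [← Preadditive.nsmul_comp, ← Functor.map_nsmul, hu, equi h]
  have h2 : (Fintype.card G) • ((X1.lam h).hom ≫ u) = (X1.lam h).hom ≫ σ := by
    rw [← Preadditive.comp_nsmul, hu]
  rw [hw _ h1, hw _ h2]

lemma proj_of_underlying (hinv : NatInvertibleIn (Fintype.card G) A) (P : EqObj act)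
    (hP : IsProjectiveIn E.conflations P.obj) : IsProjectiveIn (Sconf act E) P := by
  intro Y Z d hd f
  obtain ⟨X, i, hX⟩ := hd
  obtain ⟨u₀, hu₀⟩ := hP d.f ⟨X.obj, i.f, hX.2⟩ f.f
  obtain ⟨u, hu⟩ := average_hom hinv P Y u₀
  refine ⟨u, EqObj.hom_ext ?_⟩
  rw [EqObj.comp_f]
  obtain ⟨w, -, hw⟩ := hinv ((Fintype.card G) • f.f)
  have h1 : (Fintype.card G) • (u.f ≫ d.f) = (Fintype.card G) • f.f := by
    rw [← Preadditive.nsmul_comp, hu, Preadditive.sum_comp]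
    have he : ∀ g : G, ((P.lam g).inv ≫ (act.F g).map u₀ ≫ (Y.lam g).hom) ≫ d.f = f.f := by
      intro g
      calc ((P.lam g).inv ≫ (act.F g).map u₀ ≫ (Y.lam g).hom) ≫ d.f
          = (P.lam g).inv ≫ (act.F g).map u₀ ≫ (Y.lam g).hom ≫ d.f := by
            simp only [Category.assoc]
        _ = (P.lam g).inv ≫ (act.F g).map u₀ ≫ (act.F g).map d.f ≫ (Z.lam g).hom := by
            rw [← d.comm g]
        _ = (P.lam g).inv ≫ (act.F g).map (u₀ ≫ d.f) ≫ (Z.lam g).hom := by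
            rw [Functor.map_comp, Category.assoc]
        _ = (P.lam g).inv ≫ (act.F g).map f.f ≫ (Z.lam g).hom := by rw [hu₀]
        _ = (P.lam g).inv ≫ (P.lam g).hom ≫ f.f := by rw [f.comm g]
        _ = f.f := by rw [Iso.inv_hom_id_assoc]
    rw [Finset.sum_congr rfl (fun g _ => he g)]
    simp
  rw [hw _ h1, hw _ rfl]

lemma inj_of_underlying (hinv : NatInvertibleIn (Fintype.card G) A) (I : EqObj act)
    (hI : IsInjectiveIn E.conflations I.obj) : IsInjectiveIn (Sconf act E) I := by
  intro X Y i hi f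
  obtain ⟨Z, dd, hZ⟩ := hi
  obtain ⟨u₀, hu₀⟩ := hI i.f ⟨Z.obj, dd.f, hZ.2⟩ f.f
  obtain ⟨u, hu⟩ := average_hom hinv Y I u₀
  refine ⟨u, EqObj.hom_ext ?_⟩
  rw [EqObj.comp_f]
  obtain ⟨w, -, hw⟩ := hinv ((Fintype.card G) • f.f)
  have h1 : (Fintype.card G) • (i.f ≫ u.f) = (Fintype.card G) • f.f := by
    rw [← Preadditive.comp_nsmul, hu, Preadditive.comp_sum]
    have he : ∀ g : G, i.f ≫ (Y.lam g).inv ≫ (act.F g).map u₀ ≫ (I.lam g).hom = f.f := by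
      intro g
      calc i.f ≫ (Y.lam g).inv ≫ (act.F g).map u₀ ≫ (I.lam g).hom
          = (i.f ≫ (Y.lam g).inv) ≫ (act.F g).map u₀ ≫ (I.lam g).hom := by
            simp only [Category.assoc]
        _ = ((X.lam g).inv ≫ (act.F g).map i.f) ≫ (act.F g).map u₀ ≫ (I.lam g).hom := by
            rw [comm_inv i g]
        _ = (X.lam g).inv ≫ (act.F g).map (i.f ≫ u₀) ≫ (I.lam g).hom := by
            rw [Functor.map_comp]
            simp only [Category.assoc]
        _ = (X.lam g).inv ≫ (act.F g).map f.f ≫ (I.lam g).hom := by rw [hu₀]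
        _ = (X.lam g).inv ≫ (X.lam g).hom ≫ f.f := by rw [f.comm g]
        _ = f.f := by rw [Iso.inv_hom_id_assoc]
    rw [Finset.sum_congr rfl (fun g _ => he g)]
    simp
  rw [hw _ h1, hw _ rfl]

end Averaging

section UnitMachinery

set_option linter.unusedSectionVars false

variable {act : GAction G A}

lemma δ_congr (act : GAction G A) {g g' h h' : G} (eg : g = g') (eh : h = h') (X : A) :
    (act.δ g h).hom.app X =
      eqToHom (by rw [eg, eh]) ≫ (act.δ g' h').hom.app X ≫ eqToHom (by rw [eg, eh]) := by
  subst eg; subst eh; simp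

lemma eqF_nat {m m' : G} (e : m = m') {X Y : A} (u : X ⟶ Y) :
    (act.F m).map u ≫ eqToHom (congrArg (fun k => (act.F k).obj Y) e) =
      eqToHom (congrArg (fun k => (act.F k).obj X) e) ≫ (act.F m').map u := by
  subst e; simp

noncomputable def unitHom (act : GAction G A) (X : A) : (act.F (1 : G)).obj X ⟶ X :=
  letI := act.equiv (1 : G)
  (act.F (1 : G)).preimage ((act.δ 1 1).hom.app X ≫
    eqToHom (congrArg (fun m => (act.F m).obj X) (mul_one (1 : G))))

lemma unit_spec (act : GAction G A) (X : A) :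
    (act.F (1 : G)).map (unitHom act X) = (act.δ 1 1).hom.app X ≫
      eqToHom (congrArg (fun m => (act.F m).obj X) (mul_one (1 : G))) := by
  letI := act.equiv (1 : G)
  exact (act.F (1 : G)).map_preimage _

lemma unit_natural (act : GAction G A) {X Y : A} (u : X ⟶ Y) :
    (act.F (1 : G)).map u ≫ unitHom act Y = unitHom act X ≫ u := by
  letI := act.equiv (1 : G)
  apply (act.F (1 : G)).map_injective
  rw [Functor.map_comp, Functor.map_comp, unit_spec, unit_spec]
  have nat := (act.δ (1 : G) (1 : G)).hom.naturality u
  calc (act.F (1 : G)).map ((act.F (1 : G)).map u) ≫ (act.δ 1 1).hom.app Y ≫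
        eqToHom (congrArg (fun m => (act.F m).obj Y) (mul_one (1 : G)))
      = ((act.δ 1 1).hom.app X ≫ (act.F ((1 : G) * 1)).map u) ≫
          eqToHom (congrArg (fun m => (act.F m).obj Y) (mul_one (1 : G))) := by
        rw [← Category.assoc, ← nat]; rfl
    _ = (act.δ 1 1).hom.app X ≫
          eqToHom (congrArg (fun m => (act.F m).obj X) (mul_one (1 : G))) ≫
          (act.F (1 : G)).map u := by
        rw [Category.assoc, eqF_nat (mul_one (1 : G)) u]
    _ = ((act.δ 1 1).hom.app X ≫
          eqToHom (congrArg (fun m => (act.F m).obj X) (mul_one (1 : G)))) ≫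
          (act.F (1 : G)).map u := by rw [Category.assoc]

lemma lam_congr {act : GAction G A} (X : EqObj act) {m m' : G} (e : m = m') :
    (X.lam m).hom = eqToHom (congrArg (fun k => (act.F k).obj X.obj) e) ≫ (X.lam m').hom := by
  subst e; simp

lemma unit_lam {act : GAction G A} (X : EqObj act) : unitHom act X.obj = (X.lam 1).hom := by
  letI := act.equiv (1 : G)
  apply (act.F (1 : G)).map_injective
  rw [unit_spec]
  have comp := X.compat 1 1
  rw [lam_congr X (mul_one (1 : G))] at comp
  simp only [← Category.assoc] at comp
  have c := (cancel_mono (X.lam 1).hom).1 comp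
  rw [c]

lemma unit_app_F (act : GAction G A) (g : G) (X : A) :
    unitHom act ((act.F g).obj X) =
      (act.δ 1 g).hom.app X ≫ eqToHom (congrArg (fun m => (act.F m).obj X) (mul_one g)) := by
  letI := act.equiv (1 : G)
  apply (act.F (1 : G)).map_injective
  rw [unit_spec, Functor.map_comp, eqToHom_map]
  have coc := act.cocycle 1 1 g X
  have e1 := δ_congr act (rfl : (1 : G) = 1) (mul_one g) X
  have e2 := δ_congr act (mul_one (1 : G)) (rfl : g = g) X
  rw [e1, e2] at coc
  simp only [Category.assoc, eqToHom_trans] at coc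
  simp only [← Category.assoc] at coc
  have c1 := (cancel_mono _).1 coc
  have c2 := (cancel_mono ((act.δ 1 g).hom.app X)).1 c1
  simpa only [Category.assoc] using c2.symm

lemma unit_isIso (act : GAction G A) (X : A) : IsIso (unitHom act X) := by
  letI := act.equiv (1 : G)
  have : IsIso ((act.F (1 : G)).map (unitHom act X)) := by
    rw [unit_spec]
    infer_instance
  exact isIso_of_fully_faithful (act.F (1 : G)) _

end UnitMachinery

section Manufacture

set_option linter.unusedSectionVars false

variable {E : ExactStructure A}

/-- Pulling back a conflation along a map yields a conflation with the same kernel. -/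
lemma pullback_conflation {T Y' C : A} {x' : T ⟶ Y'} {z' : Y' ⟶ C}
    (hc : Conflation.mk T Y' C x' z' ∈ E.conflations) {S : A} (w : S ⟶ C) :
    ∃ (N : A) (κ : T ⟶ N) (π : N ⟶ S) (χ : N ⟶ Y'),
      Conflation.mk T N S κ π ∈ E.conflations ∧ IsPullback π χ w z' ∧
      κ ≫ χ = x' ∧ κ ≫ π = 0 := by
  obtain ⟨N, π, χ, hdN, hpb⟩ := E.ex2 z' ⟨T, x', hc⟩ w
  obtain ⟨T', κ', hcN⟩ := hdN
  have w0 : x' ≫ z' = 0 := conf_w hc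
  have κdef : (0 : T ⟶ S) ≫ w = x' ≫ z' := by rw [w0, zero_comp]
  set κ : T ⟶ N := hpb.lift 0 x' κdef with hκ
  have hκπ : κ ≫ π = 0 := hpb.lift_fst _ _ _
  have hκχ : κ ≫ χ = x' := hpb.lift_snd _ _ _
  haveI : Mono x' := conf_mono hc
  have monoκ : Mono κ := by
    constructor
    intro V a b hab
    rw [← cancel_mono x', ← hκχ, ← Category.assoc, ← Category.assoc, hab]
  -- κ is a kernel of π; κ' is also a kernel. Produce the comparison iso.
  haveI monoκ' : Mono κ' := conf_mono hcN
  have hκ'π : κ' ≫ π = 0 := conf_w hcN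
  -- factor κ' through κ
  have fact : ∀ {V : A} (t : V ⟶ N), t ≫ π = 0 → ∃ a : V ⟶ T, a ≫ κ = t := by
    intro V t ht
    have h1 : (t ≫ χ) ≫ z' = 0 := by
      rw [Category.assoc, ← hpb.w, ← Category.assoc, ht, zero_comp]
    refine ⟨kerLift hc (t ≫ χ) h1, ?_⟩
    apply hpb.hom_ext
    · rw [Category.assoc, hκπ, comp_zero, ht]
    · rw [Category.assoc, hκχ, kerLift_i]
  obtain ⟨a₁, ha₁⟩ := fact κ' hκ'π
  have fact' : ∃ a₂ : T ⟶ T', a₂ ≫ κ' = κ := by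
    refine ⟨kerLift hcN κ hκπ, kerLift_i hcN κ hκπ⟩
  obtain ⟨a₂, ha₂⟩ := fact'
  have iso1 : a₁ ≫ a₂ = 𝟙 T' := by
    rw [← cancel_mono κ', Category.assoc, ha₂, ha₁, Category.id_comp]
  have iso2 : a₂ ≫ a₁ = 𝟙 T := by
    rw [← cancel_mono κ, Category.assoc, ha₁, ha₂, Category.id_comp]
  refine ⟨N, κ, π, χ, ?_, hpb, hκχ, hκπ⟩
  refine E.iso_closed _ hcN _ ⟨⟨a₁, a₂, iso1, iso2⟩, Iso.refl N, Iso.refl S, ?_, ?_⟩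
  · simpa using ha₁.symm
  · simp

/-- Every object is the source of an inflation (given one conflation exists). -/
lemma kernel_realizable {c₀ : Conflation A} (hc₀ : c₀ ∈ E.conflations) (T : A) :
    ∃ (Y' C : A) (x' : T ⟶ Y') (z' : Y' ⟶ C),
      Conflation.mk T Y' C x' z' ∈ E.conflations := by
  have hi : IsInflationIn E.conflations c₀.i := ⟨c₀.Z, c₀.d, hc₀⟩
  obtain ⟨Y', x', h', hinf, -⟩ := E.ex2op c₀.i hi (0 : c₀.X ⟶ T)
  obtain ⟨C, z', hmem⟩ := hinf
  exact ⟨Y', C, x', z', hmem⟩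

/-- Binary biproducts, manufactured from the exact structure axioms. -/
lemma biprod_manufacture {c₀ : Conflation A} (hc₀ : c₀ ∈ E.conflations) (T S : A) :
    ∃ (N : A) (κ : T ⟶ N) (π : N ⟶ S) (σ : S ⟶ N) (ρ : N ⟶ T),
      Conflation.mk T N S κ π ∈ E.conflations ∧
      σ ≫ π = 𝟙 S ∧ κ ≫ ρ = 𝟙 T ∧ σ ≫ ρ = 0 ∧ κ ≫ π = 0 ∧
      ρ ≫ κ + π ≫ σ = 𝟙 N := by
  obtain ⟨Y', C, x', z', hm⟩ := kernel_realizable hc₀ T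
  obtain ⟨N, κ, π, χ, hmem, hpb, hκχ, hκπ⟩ := pullback_conflation hm (0 : S ⟶ C)
  have σdef : (𝟙 S) ≫ (0 : S ⟶ C) = (0 : S ⟶ Y') ≫ z' := by simp
  set σ : S ⟶ N := hpb.lift (𝟙 S) 0 σdef with hσ
  have hσπ : σ ≫ π = 𝟙 S := hpb.lift_fst _ _ _
  have e0 : (𝟙 N - π ≫ σ) ≫ π = 0 := by
    rw [Preadditive.sub_comp, Category.id_comp, Category.assoc, hσπ, Category.comp_id, sub_self]
  set ρ : N ⟶ T := kerLift hmem (𝟙 N - π ≫ σ) e0 with hρ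
  have hρκ : ρ ≫ κ = 𝟙 N - π ≫ σ := kerLift_i hmem _ _
  haveI : Mono κ := conf_mono hmem
  have hκρ : κ ≫ ρ = 𝟙 T := by
    rw [← cancel_mono κ, Category.assoc, hρκ, Preadditive.comp_sub, Category.comp_id,
      ← Category.assoc, hκπ, zero_comp, sub_zero, Category.id_comp]
  have hσρ : σ ≫ ρ = 0 := by
    rw [← cancel_mono κ, Category.assoc, hρκ, Preadditive.comp_sub, Category.comp_id,
      ← Category.assoc, hσπ, Category.id_comp, sub_self, zero_comp]
  exact ⟨N, κ, π, σ, ρ, hmem, hσπ, hκρ, hσρ, hκπ, by rw [hρκ]; abel⟩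

end Manufacture

section MultiBiprod

set_option linter.unusedSectionVars false

variable {E : ExactStructure A}

/-- Iterated manufactured biproducts over a nonempty finite index set. -/
lemma multi_biprod {c₀ : Conflation A} (hc₀ : c₀ ∈ E.conflations) (Cf : G → A)
    (s : Finset G) (hs : s.Nonempty) :
    ∃ (ZS : A) (P : ∀ g : G, ZS ⟶ Cf g) (J : ∀ g : G, Cf g ⟶ ZS),
      (∀ g ∈ s, J g ≫ P g = 𝟙 (Cf g)) ∧
      (∀ g h : G, g ≠ h → J g ≫ P h = 0) ∧
      (∑ g ∈ s, P g ≫ J g) = 𝟙 ZS ∧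
      (∀ g ∉ s, P g = 0) ∧ (∀ g ∉ s, J g = 0) := by
  classical
  induction hs using Finset.Nonempty.cons_induction with
  | singleton a =>
    refine ⟨Cf a,
      fun g => if e : g = a then eqToHom (congrArg Cf e.symm) else 0,
      fun g => if e : g = a then eqToHom (congrArg Cf e) else 0, ?_, ?_, ?_, ?_, ?_⟩
    · intro g hg
      have e := Finset.mem_singleton.1 hg
      subst e
      simp
    · intro g h hgh
      beta_reduce
      by_cases e : g = a
      · subst e
        rw [dif_pos rfl, dif_neg (fun h' : h = g => hgh h'.symm), comp_zero]
      · rw [dif_neg e, zero_comp]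
    · simp
    · intro g hg
      beta_reduce
      rw [dif_neg (fun e => hg (by rw [e]; exact Finset.mem_singleton_self a))]
    · intro g hg
      beta_reduce
      rw [dif_neg (fun e => hg (by rw [e]; exact Finset.mem_singleton_self a))]
  | cons a s ha hs ih =>
    obtain ⟨ZS, P, J, hJP, hJP0, hsum, hP0, hJ0⟩ := ih
    obtain ⟨N, κ, π, σ, ρ, hmem, hσπ, hκρ, hσρ, hκπ, htot⟩ := biprod_manufacture hc₀ (Cf a) ZS
    refine ⟨N,
      fun g => if e : g = a then ρ ≫ eqToHom (congrArg Cf e.symm) else π ≫ P g,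
      fun g => if e : g = a then eqToHom (congrArg Cf e) ≫ κ else J g ≫ σ, ?_, ?_, ?_, ?_, ?_⟩
    · intro g hg
      beta_reduce
      rcases Finset.mem_cons.1 hg with e | hgs
      · subst e
        rw [dif_pos rfl, dif_pos rfl]
        slice_lhs 2 3 => rw [hκρ]
        simp
      · have e : g ≠ a := fun e => ha (e ▸ hgs)
        rw [dif_neg e, dif_neg e]
        slice_lhs 2 3 => rw [hσπ]
        simp [hJP g hgs]
    · intro g h hgh
      beta_reduce
      by_cases e : g = a
      · subst e
        rw [dif_pos rfl, dif_neg (fun h' : h = g => hgh h'.symm)]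
        slice_lhs 2 3 => rw [hκπ]
        simp
      · by_cases e' : h = a
        · subst e'
          rw [dif_neg e, dif_pos rfl]
          slice_lhs 2 3 => rw [hσρ]
          simp
        · rw [dif_neg e, dif_neg e']
          slice_lhs 2 3 => rw [hσπ]
          simp only [Category.id_comp, Category.comp_id, Category.assoc]
          rw [hJP0 g h hgh]
    · beta_reduce
      rw [Finset.sum_cons]
      have h1 : ∀ g ∈ s,
          (if e : g = a then ρ ≫ eqToHom (congrArg Cf e.symm) else π ≫ P g) ≫
          (if e : g = a then eqToHom (congrArg Cf e) ≫ κ else J g ≫ σ) =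
          π ≫ (P g ≫ J g) ≫ σ := by
        intro g hgs
        have e : g ≠ a := fun e => ha (e ▸ hgs)
        rw [dif_neg e, dif_neg e]
        simp [Category.assoc]
      rw [Finset.sum_congr rfl h1, dif_pos rfl, dif_pos rfl, ← Preadditive.comp_sum,
        ← Preadditive.sum_comp, hsum, Category.id_comp]
      simpa using htot
    · intro g hg
      beta_reduce
      have e : g ≠ a := fun e => hg (by rw [e]; exact Finset.mem_cons_self a s)
      have hgs : g ∉ s := fun h' => hg (Finset.mem_cons.2 (Or.inr h'))
      rw [dif_neg e, hP0 g hgs, comp_zero]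
    · intro g hg
      beta_reduce
      have e : g ≠ a := fun e => hg (by rw [e]; exact Finset.mem_cons_self a s)
      have hgs : g ∉ s := fun h' => hg (Finset.mem_cons.2 (Or.inr h'))
      rw [dif_neg e, hJ0 g hgs, zero_comp]

end MultiBiprod

section ZetaCalculus

set_option linter.unusedSectionVars false

lemma eqToHom_self {X : A} (p : X = X) : eqToHom p = 𝟙 X := rfl

variable {act : GAction G A}

/-- The twisted component maps used to define equivariant structures. -/
def zeta {Z V : A} (Q : ∀ g : G, V ⟶ (act.F g).obj Z) (h j m : G) (e : j * h = m) :
    (act.F h).obj V ⟶ (act.F m).obj Z :=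
  (act.F h).map (Q j) ≫ (act.δ h j).hom.app Z ≫
    eqToHom (congrArg (fun t => (act.F t).obj Z) e)

/-- The doubly twisted component maps. -/
def zeta2 {Z V : A} (Q : ∀ g : G, V ⟶ (act.F g).obj Z) (g h l m : G) (e : (l * h) * g = m) :
    (act.F g).obj ((act.F h).obj V) ⟶ (act.F m).obj Z :=
  (act.F g).map ((act.F h).map (Q l)) ≫ (act.F g).map ((act.δ h l).hom.app Z) ≫
    (act.δ g (l * h)).hom.app Z ≫ eqToHom (congrArg (fun t => (act.F t).obj Z) e)

lemma zeta_congr {Z V : A} (Q : ∀ g : G, V ⟶ (act.F g).obj Z) {h j j' m : G}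
    (e' : j = j') (e₁ : j * h = m) (e₂ : j' * h = m) :
    zeta Q h j m e₁ = zeta Q h j' m e₂ := by subst e'; rfl

lemma zeta2_congr {Z V : A} (Q : ∀ g : G, V ⟶ (act.F g).obj Z) {g h l l' m : G}
    (e' : l = l') (e₁ : (l * h) * g = m) (e₂ : (l' * h) * g = m) :
    zeta2 Q g h l m e₁ = zeta2 Q g h l' m e₂ := by subst e'; rfl

lemma zeta_pre {Z V V' : A} (Q : ∀ g : G, V ⟶ (act.F g).obj Z) (u : V' ⟶ V)
    (h j m : G) (e : j * h = m) :
    zeta (fun g => u ≫ Q g) h j m e = (act.F h).map u ≫ zeta Q h j m e := by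
  simp [zeta, Functor.map_comp, Category.assoc]

lemma zeta_comp_d {Z Z₂ V : A} (Q : ∀ g : G, V ⟶ (act.F g).obj Z) (d : Z ⟶ Z₂)
    (h j m : G) (e : j * h = m) :
    zeta Q h j m e ≫ (act.F m).map d = zeta (fun g => Q g ≫ (act.F g).map d) h j m e := by
  subst e
  simp only [zeta, Functor.map_comp, Category.assoc, eqToHom_self, Category.comp_id,
    Category.id_comp]
  rw [← (act.δ h j).hom.naturality d]
  rfl

/-- Applying `F g` to a `zeta` and twisting gives a `zeta2`. -/
lemma map_zeta {Z V : A} (Q : ∀ g : G, V ⟶ (act.F g).obj Z) (g h j m₁ m : G)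
    (e₁ : j * h = m₁) (e₂ : m₁ * g = m) :
    (act.F g).map (zeta Q h j m₁ e₁) ≫ (act.δ g m₁).hom.app Z ≫
        eqToHom (congrArg (fun t => (act.F t).obj Z) e₂) =
      zeta2 Q g h j m (by rw [e₁, e₂]) := by
  subst e₁; subst e₂
  simp only [zeta, zeta2, Functor.map_comp, Category.assoc, eqToHom_self,
    Category.comp_id, Category.id_comp]

/-- Pushing a `zeta` along the multiplication isomorphism gives a `zeta2`; this is
the cocycle condition. -/
lemma zeta_push {Z V : A} (Q : ∀ g : G, V ⟶ (act.F g).obj Z) (g h j m : G)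
    (e : j * (h * g) = m) :
    (act.δ g h).hom.app V ≫ zeta Q (h * g) j m e =
      zeta2 Q g h j m ((mul_assoc j h g).trans e) := by
  subst e
  have nat := (act.δ g h).hom.naturality (Q j)
  have coc := act.cocycle g h j Z
  simp only [zeta, zeta2, eqToHom_self, Category.comp_id]
  rw [← Category.assoc, ← nat, Category.assoc, ← coc]
  rfl

lemma zeta_one {Z V : A} (Q : ∀ g : G, V ⟶ (act.F g).obj Z) (m : G) (e : m * 1 = m) :
    zeta Q 1 m m e = (act.F (1 : G)).map (Q m) ≫ unitHom act ((act.F m).obj Z) := by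
  rw [unit_app_F]
  rfl

end ZetaCalculus

section MakeIso

set_option linter.unusedSectionVars false

variable {act : GAction G A}

lemma epi_of_section {X Y : A} {f : X ⟶ Y} {x : Y ⟶ X} (w : x ≫ f = 𝟙 Y) : Epi f := by
  constructor
  intro Zc a b hab
  calc a = (x ≫ f) ≫ a := by rw [w, Category.id_comp]
    _ = x ≫ f ≫ b := by rw [Category.assoc, hab]
    _ = (x ≫ f) ≫ b := by rw [Category.assoc]
    _ = b := by rw [w, Category.id_comp]

lemma make_iso (V : A) (hom : ∀ h : G, (act.F h).obj V ⟶ V)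
    (compat : ∀ g h : G, (act.F g).map (hom h) ≫ hom g =
      (act.δ g h).hom.app V ≫ hom (h * g))
    (hom1 : hom 1 = unitHom act V) :
    ∃ inv : ∀ h : G, V ⟶ (act.F h).obj V,
      (∀ h, hom h ≫ inv h = 𝟙 ((act.F h).obj V)) ∧ (∀ h, inv h ≫ hom h = 𝟙 V) := by
  haveI : IsIso (unitHom act V) := unit_isIso act V
  have hom_congr : ∀ {j j' : G} (e : j = j'),
      eqToHom (congrArg (fun t => (act.F t).obj V) e) ≫ hom j' = hom j := by
    intro j j' e
    subst e
    rw [eqToHom_self, Category.id_comp]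
  set sec : ∀ h : G, V ⟶ (act.F h).obj V := fun h =>
    inv (unitHom act V) ≫ eqToHom (congrArg (fun t => (act.F t).obj V)
      (inv_mul_cancel h).symm) ≫ inv ((act.δ h h⁻¹).hom.app V) ≫
      (act.F h).map (hom h⁻¹) with hsec
  have sec_hom : ∀ h, sec h ≫ hom h = 𝟙 V := by
    intro h
    rw [hsec]
    simp only [Category.assoc]
    rw [compat h h⁻¹, ← Category.assoc (inv ((act.δ h h⁻¹).hom.app V)),
      IsIso.inv_hom_id, Category.id_comp, hom_congr (inv_mul_cancel h).symm, hom1,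
      IsIso.inv_hom_id]
  have epiF : ∀ h : G, Epi ((act.F h).map (hom h⁻¹)) := by
    intro h
    refine epi_of_section (x := (act.F h).map (sec h⁻¹)) ?_
    rw [← Functor.map_comp, sec_hom]
    exact (act.F h).map_id V
  have epi_sec : ∀ h, Epi (sec h) := by
    intro h
    rw [hsec]
    haveI := epiF h
    haveI : IsIso (eqToHom (congrArg (fun t => (act.F t).obj V) (inv_mul_cancel h).symm)) :=
      inferInstance
    apply epi_comp
  refine ⟨sec, fun h => ?_, sec_hom⟩
  haveI := epi_sec h
  rw [← cancel_epi (sec h), ← Category.assoc, sec_hom h, Category.id_comp, Category.comp_id]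

end MakeIso

section BuildZhat

set_option linter.unusedSectionVars false

variable {act : GAction G A} [∀ g : G, (act.F g).Additive] {E : ExactStructure A} [Fintype G]

lemma build_equiv_biprod {c₀ : Conflation A} (hc₀ : c₀ ∈ E.conflations) (Z : A) :
    ∃ (ZH : EqObj act) (P : ∀ g : G, ZH.obj ⟶ (act.F g).obj Z)
      (J : ∀ g : G, (act.F g).obj Z ⟶ ZH.obj),
      (∀ g, J g ≫ P g = 𝟙 ((act.F g).obj Z)) ∧
      (∀ g h : G, g ≠ h → J g ≫ P h = 0) ∧
      ((∑ g : G, P g ≫ J g) = 𝟙 ZH.obj) ∧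
      (∀ h m : G, (ZH.lam h).hom ≫ P m =
        zeta P h (m * h⁻¹) m (inv_mul_cancel_right m h)) ∧
      (∀ h g : G, (act.F h).map (J g) ≫ (ZH.lam h).hom =
        (act.δ h g).hom.app Z ≫ J (g * h)) := by
  classical
  haveI : Nonempty G := ⟨1⟩
  obtain ⟨ZS, P, J, hJP, hJP0, hsum, -, -⟩ :=
    multi_biprod hc₀ (fun g : G => (act.F g).obj Z) Finset.univ Finset.univ_nonempty
  have hJP' : ∀ g, J g ≫ P g = 𝟙 _ := fun g => hJP g (Finset.mem_univ g)
  have JPeq : ∀ {j m : G} (e : j = m),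
      J j ≫ P m = eqToHom (congrArg (fun t => (act.F t).obj Z) e) := by
    intro j m e
    subst e
    rw [hJP', eqToHom_self]
  have Pext : ∀ {T : A} (x y : T ⟶ ZS), (∀ m, x ≫ P m = y ≫ P m) → x = y := by
    intro T x y hxy
    calc x = x ≫ 𝟙 ZS := (Category.comp_id x).symm
      _ = ∑ m : G, x ≫ P m ≫ J m := by rw [← hsum, Preadditive.comp_sum]
      _ = ∑ m : G, y ≫ P m ≫ J m := by
          refine Finset.sum_congr rfl (fun m _ => ?_)
          rw [← Category.assoc, hxy m, Category.assoc]
      _ = y ≫ 𝟙 ZS := by rw [← hsum, Preadditive.comp_sum]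
      _ = y := Category.comp_id y
  set hom : ∀ h : G, (act.F h).obj ZS ⟶ ZS := fun h =>
    ∑ k : G, zeta P h k (k * h) rfl ≫ J (k * h) with hhom
  have zeta_eqToHom : ∀ {V : A} (Q : ∀ g : G, V ⟶ (act.F g).obj Z) (h j m m' : G)
      (e : j * h = m) (e' : m = m'),
      zeta Q h j m e ≫ eqToHom (congrArg (fun t => (act.F t).obj Z) e') =
        zeta Q h j m' (e.trans e') := by
    intro V Q h j m m' e e'
    subst e'
    rw [eqToHom_self, Category.comp_id]
  have key : ∀ h m : G, hom h ≫ P m = zeta P h (m * h⁻¹) m (inv_mul_cancel_right m h) := by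
    intro h m
    rw [hhom]
    beta_reduce
    rw [Preadditive.sum_comp]
    rw [Finset.sum_eq_single (m * h⁻¹)]
    · rw [Category.assoc, JPeq (inv_mul_cancel_right m h),
        zeta_eqToHom P h (m * h⁻¹) _ m rfl (inv_mul_cancel_right m h)]
    · intro k _ hk
      have : k * h ≠ m := fun e => hk (by rw [← e, mul_inv_cancel_right])
      rw [Category.assoc, hJP0 _ _ this, comp_zero]
    · intro hm
      exact absurd (Finset.mem_univ _) hm
  have hJhom : ∀ h g : G, (act.F h).map (J g) ≫ hom h =
      (act.δ h g).hom.app Z ≫ J (g * h) := by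
    intro h g
    rw [hhom]
    beta_reduce
    rw [Preadditive.comp_sum]
    rw [Finset.sum_eq_single g]
    · rw [← Category.assoc, ← zeta_pre, zeta]
      beta_reduce
      rw [hJP' g]
      simp [eqToHom_self]
    · intro k _ hk
      rw [← Category.assoc, ← zeta_pre, zeta, hJP0 g k (fun e => hk e.symm)]
      simp
    · intro hm
      exact absurd (Finset.mem_univ _) hm
  have compat : ∀ g h : G, (act.F g).map (hom h) ≫ hom g =
      (act.δ g h).hom.app ZS ≫ hom (h * g) := by
    intro g h
    apply Pext
    intro m
    rw [Category.assoc, key g m]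
    have pfA : ((m * g⁻¹ * h⁻¹) * h) * g = m := by
      rw [inv_mul_cancel_right, inv_mul_cancel_right]
    have pfB : ((m * (h * g)⁻¹) * h) * g = m := by
      rw [mul_assoc, inv_mul_cancel_right]
    calc (act.F g).map (hom h) ≫ zeta P g (m * g⁻¹) m (inv_mul_cancel_right m g)
        = (act.F g).map (hom h ≫ P (m * g⁻¹)) ≫ (act.δ g (m * g⁻¹)).hom.app Z ≫
            eqToHom (congrArg (fun t => (act.F t).obj Z) (inv_mul_cancel_right m g)) := by
          rw [zeta, Functor.map_comp]
          simp only [Category.assoc]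
      _ = (act.F g).map (zeta P h (m * g⁻¹ * h⁻¹) (m * g⁻¹)
            (inv_mul_cancel_right (m * g⁻¹) h)) ≫ (act.δ g (m * g⁻¹)).hom.app Z ≫
            eqToHom (congrArg (fun t => (act.F t).obj Z) (inv_mul_cancel_right m g)) := by
          rw [key]
      _ = zeta2 P g h (m * g⁻¹ * h⁻¹) m pfA :=
          map_zeta P g h _ _ m (inv_mul_cancel_right (m * g⁻¹) h) (inv_mul_cancel_right m g)
      _ = zeta2 P g h (m * (h * g)⁻¹) m pfB :=
          zeta2_congr P (by rw [mul_inv_rev, ← mul_assoc]) pfA pfB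
      _ = (act.δ g h).hom.app ZS ≫ zeta P (h * g) (m * (h * g)⁻¹) m
            (inv_mul_cancel_right m (h * g)) := (zeta_push P g h _ m _).symm
      _ = (act.δ g h).hom.app ZS ≫ hom (h * g) ≫ P m := by rw [key]
      _ = ((act.δ g h).hom.app ZS ≫ hom (h * g)) ≫ P m := by rw [Category.assoc]
  have hom1 : hom 1 = unitHom act ZS := by
    apply Pext
    intro m
    rw [key 1 m,
      zeta_congr P (show m * (1 : G)⁻¹ = m by rw [inv_one, mul_one])
        (inv_mul_cancel_right m 1) (mul_one m), zeta_one, unit_natural act (P m)]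
  obtain ⟨homInv, hhomInv, hInvhom⟩ := make_iso ZS hom compat hom1
  refine ⟨⟨ZS, fun h => ⟨hom h, homInv h, hhomInv h, hInvhom h⟩, compat⟩,
    P, J, hJP', hJP0, hsum, key, hJhom⟩

end BuildZhat

section Tower

set_option linter.unusedSectionVars false

variable {act : GAction G A} [∀ g : G, (act.F g).Additive] {E : ExactStructure A}

/-- The iterated pullback ("tower") of the translates of a deflation along a family of
maps from a base object. -/
lemma tower {Y Z : A} (d : Y ⟶ Z)
    (hdg : ∀ g : G, IsDeflationIn E.conflations ((act.F g).map d))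
    (B₀ : A) (m : ∀ g : G, B₀ ⟶ (act.F g).obj Z) (s : Finset G) (hs : s.Nonempty) :
    ∃ (W : A) (p : W ⟶ B₀) (Pi : ∀ g : G, W ⟶ (act.F g).obj Y),
      IsDeflationIn E.conflations p ∧
      (∀ g ∈ s, Pi g ≫ (act.F g).map d = p ≫ m g) ∧ (∀ g ∉ s, Pi g = 0) ∧
      (∀ (T : A) (t : T ⟶ B₀) (y : ∀ g : G, T ⟶ (act.F g).obj Y),
        (∀ g ∈ s, y g ≫ (act.F g).map d = t ≫ m g) → (∀ g ∉ s, y g = 0) →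
        ∃ w : T ⟶ W, (w ≫ p = t ∧ ∀ g : G, w ≫ Pi g = y g) ∧
          ∀ w' : T ⟶ W, (w' ≫ p = t ∧ ∀ g : G, w' ≫ Pi g = y g) → w' = w) := by
  classical
  induction hs using Finset.Nonempty.cons_induction with
  | singleton a =>
    obtain ⟨W, p, f', hp, hpb⟩ := E.ex2 ((act.F a).map d) (hdg a) (m a)
    refine ⟨W, p, fun g => if e : g = a then
        f' ≫ eqToHom (congrArg (fun t => (act.F t).obj Y) e.symm) else 0, hp, ?_, ?_, ?_⟩
    · intro g hg
      beta_reduce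
      have e := Finset.mem_singleton.1 hg
      subst e
      rw [dif_pos rfl, eqToHom_self, Category.comp_id, ← hpb.w]
    · intro g hg
      beta_reduce
      rw [dif_neg (fun e => hg (by rw [e]; exact Finset.mem_singleton_self a))]
    · intro T t y hy hy0
      have cond : t ≫ m a = y a ≫ (act.F a).map d := (hy a (Finset.mem_singleton_self a)).symm
      refine ⟨hpb.lift t (y a) cond, ⟨hpb.lift_fst _ _ _, ?_⟩, ?_⟩
      · intro g
        beta_reduce
        by_cases e : g = a
        · subst e
          rw [dif_pos rfl, eqToHom_self, Category.comp_id, hpb.lift_snd]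
        · rw [dif_neg e, comp_zero, hy0 g (fun h' => e (Finset.mem_singleton.1 h'))]
      · intro w' ⟨hw1, hw2⟩
        apply hpb.hom_ext
        · rw [hpb.lift_fst, hw1]
        · have := hw2 a
          beta_reduce at this
          rw [dif_pos rfl, eqToHom_self, Category.comp_id] at this
          rw [hpb.lift_snd, this]
  | cons a s ha hs ih =>
    obtain ⟨W, p, Pi, hp, hc, hz, hu⟩ := ih
    obtain ⟨W', d'', f'', hd'', hpb⟩ := E.ex2 ((act.F a).map d) (hdg a) (p ≫ m a)
    refine ⟨W', d'' ≫ p, fun g => if e : g = a then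
        f'' ≫ eqToHom (congrArg (fun t => (act.F t).obj Y) e.symm) else d'' ≫ Pi g,
      E.ex1 d'' p hd'' hp, ?_, ?_, ?_⟩
    · intro g hg
      beta_reduce
      rcases Finset.mem_cons.1 hg with e | hgs
      · subst e
        rw [dif_pos rfl, eqToHom_self, Category.comp_id, ← hpb.w, Category.assoc]
      · have e : g ≠ a := fun e => ha (e ▸ hgs)
        rw [dif_neg e, Category.assoc, hc g hgs, Category.assoc]
    · intro g hg
      beta_reduce
      have e : g ≠ a := fun e => hg (by rw [e]; exact Finset.mem_cons_self a s)
      have hgs : g ∉ s := fun h' => hg (Finset.mem_cons.2 (Or.inr h'))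
      rw [dif_neg e, hz g hgs, comp_zero]
    · intro T t y hy hy0
      set y' : ∀ g : G, T ⟶ (act.F g).obj Y := fun g => if g = a then 0 else y g with hy'
      have hy'c : ∀ g ∈ s, y' g ≫ (act.F g).map d = t ≫ m g := by
        intro g hgs
        rw [hy']
        beta_reduce
        rw [if_neg (show ¬ g = a from fun e => ha (e ▸ hgs))]
        exact hy g (Finset.mem_cons.2 (Or.inr hgs))
      have hy'0 : ∀ g ∉ s, y' g = 0 := by
        intro g hgs
        rw [hy']
        beta_reduce
        by_cases e : g = a
        · rw [if_pos e]
        · rw [if_neg e]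
          exact hy0 g (fun h' => (Finset.mem_cons.1 h').elim e hgs)
      obtain ⟨w₀, ⟨hw₀p, hw₀Pi⟩, hw₀u⟩ := hu T t y' hy'c hy'0
      have cond : w₀ ≫ p ≫ m a = y a ≫ (act.F a).map d := by
        rw [← Category.assoc, hw₀p, ← hy a (Finset.mem_cons_self a s)]
      refine ⟨hpb.lift w₀ (y a) cond, ⟨?_, ?_⟩, ?_⟩
      · rw [← Category.assoc, hpb.lift_fst, hw₀p]
      · intro g
        beta_reduce
        by_cases e : g = a
        · subst e
          rw [dif_pos rfl, eqToHom_self, Category.comp_id, hpb.lift_snd]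
        · rw [dif_neg e, ← Category.assoc, hpb.lift_fst, hw₀Pi g, hy']
          beta_reduce
          rw [if_neg e]
      · intro w' ⟨hw1, hw2⟩
        have hkey : w' ≫ d'' = w₀ := by
          apply hw₀u
          constructor
          · rw [Category.assoc, hw1]
          · intro g
            by_cases e : g = a
            · subst e
              rw [Category.assoc, hz g ha, comp_zero, hy']
              beta_reduce
              rw [if_pos rfl, comp_zero]
            · have := hw2 g
              beta_reduce at this
              rw [dif_neg e] at this
              rw [Category.assoc, this, hy']
              beta_reduce
              rw [if_neg e]
        apply hpb.hom_ext
        · rw [hpb.lift_fst, hkey]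
        · have := hw2 a
          beta_reduce at this
          rw [dif_pos rfl, eqToHom_self, Category.comp_id] at this
          rw [hpb.lift_snd, this]

end Tower

section Master

set_option linter.unusedSectionVars false

variable {act : GAction G A} [∀ g : G, (act.F g).Additive] {E : ExactStructure A} [Fintype G]

lemma zeta_plain {Z V : A} (Q : ∀ g : G, V ⟶ (act.F g).obj Z) (h j : G) (e : j * h = j * h) :
    zeta Q h j (j * h) e = (act.F h).map (Q j) ≫ (act.δ h j).hom.app Z := by
  rw [zeta, eqToHom_self, Category.comp_id]

lemma master (hadm : ∀ (g : G), ∀ c ∈ E.conflations, c.map (act.F g) ∈ E.conflations)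
    {X Y Z : A} {i : X ⟶ Y} {d : Y ⟶ Z}
    (hc : Conflation.mk X Y Z i d ∈ E.conflations) :
    ∃ (ZH : EqObj act) (P : ∀ g : G, ZH.obj ⟶ (act.F g).obj Z)
      (J : ∀ g : G, (act.F g).obj Z ⟶ ZH.obj)
      (W : EqObj act) (p : W ⟶ ZH) (Pi : ∀ g : G, W.obj ⟶ (act.F g).obj Y),
      (∀ g, J g ≫ P g = 𝟙 ((act.F g).obj Z)) ∧
      (∀ g h : G, g ≠ h → J g ≫ P h = 0) ∧
      (∀ h g : G, (act.F h).map (J g) ≫ (ZH.lam h).hom =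
        (act.δ h g).hom.app Z ≫ J (g * h)) ∧
      IsDeflationIn (Sconf act E) p ∧
      (∀ g, Pi g ≫ (act.F g).map d = p.f ≫ P g) ∧
      (∀ h g : G, (W.lam h).hom ≫ Pi (g * h) =
        (act.F h).map (Pi g) ≫ (act.δ h g).hom.app Y) ∧
      (∀ (T : A) (t : T ⟶ ZH.obj) (y : ∀ g : G, T ⟶ (act.F g).obj Y),
        (∀ g, y g ≫ (act.F g).map d = t ≫ P g) →
        ∃ w : T ⟶ W.obj, w ≫ p.f = t ∧ ∀ g, w ≫ Pi g = y g) := by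
  classical
  haveI : Nonempty G := ⟨1⟩
  obtain ⟨ZH, P, J, hJP, hJP0, hsum, keyZ, hJlam⟩ := build_equiv_biprod (act := act) hc Z
  have hdg : ∀ g : G, IsDeflationIn E.conflations ((act.F g).map d) :=
    fun g => ⟨(act.F g).obj X, (act.F g).map i, hadm g _ hc⟩
  obtain ⟨W₀, p₀, Pi, hp₀, hcomp, -, huniv⟩ :=
    tower d hdg ZH.obj P Finset.univ Finset.univ_nonempty
  have hcomp' : ∀ g, Pi g ≫ (act.F g).map d = p₀ ≫ P g :=
    fun g => hcomp g (Finset.mem_univ g)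
  have Wext : ∀ {T : A} (u v : T ⟶ W₀),
      u ≫ p₀ = v ≫ p₀ → (∀ g, u ≫ Pi g = v ≫ Pi g) → u = v := by
    intro T u v h1 h2
    obtain ⟨w, -, hwu⟩ := huniv T (v ≫ p₀) (fun g => v ≫ Pi g)
      (fun g _ => by rw [Category.assoc, hcomp' g, Category.assoc])
      (fun g hg => absurd (Finset.mem_univ g) hg)
    rw [hwu u ⟨h1, h2⟩, hwu v ⟨rfl, fun g => rfl⟩]
  have hex : ∀ h : G, ∃ w : (act.F h).obj W₀ ⟶ W₀,
      (w ≫ p₀ = (act.F h).map p₀ ≫ (ZH.lam h).hom ∧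
        ∀ g, w ≫ Pi g = zeta Pi h (g * h⁻¹) g (inv_mul_cancel_right g h)) ∧
      ∀ w', (w' ≫ p₀ = (act.F h).map p₀ ≫ (ZH.lam h).hom ∧
        ∀ g, w' ≫ Pi g = zeta Pi h (g * h⁻¹) g (inv_mul_cancel_right g h)) → w' = w := by
    intro h
    refine huniv _ _ _ (fun g _ => ?_) (fun g hg => absurd (Finset.mem_univ g) hg)
    rw [zeta_comp_d]
    have : (fun k => Pi k ≫ (act.F k).map d) = fun k => p₀ ≫ P k := funext hcomp'
    rw [this, zeta_pre, Category.assoc, ← keyZ h g]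
  choose homW hspec huniq using hex
  have hom_p : ∀ h, homW h ≫ p₀ = (act.F h).map p₀ ≫ (ZH.lam h).hom :=
    fun h => (hspec h).1
  have hom_Pi : ∀ h g, homW h ≫ Pi g = zeta Pi h (g * h⁻¹) g (inv_mul_cancel_right g h) :=
    fun h g => (hspec h).2 g
  have compat : ∀ g h : G, (act.F g).map (homW h) ≫ homW g =
      (act.δ g h).hom.app W₀ ≫ homW (h * g) := by
    intro g h
    apply Wext
    · rw [Category.assoc, hom_p g, Category.assoc, hom_p (h * g), ← Category.assoc,
        ← Category.assoc, ← Functor.map_comp, hom_p h, Functor.map_comp]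
      rw [Category.assoc, Category.assoc, ZH.compat g h]
      rw [← Category.assoc ((act.δ g h).hom.app W₀), ← (act.δ g h).hom.naturality p₀]
      simp only [Category.assoc]
      rfl
    · intro m
      have pfA : ((m * g⁻¹ * h⁻¹) * h) * g = m := by
        rw [inv_mul_cancel_right, inv_mul_cancel_right]
      have pfB : ((m * (h * g)⁻¹) * h) * g = m := by
        rw [mul_assoc, inv_mul_cancel_right]
      calc ((act.F g).map (homW h) ≫ homW g) ≫ Pi m
          = (act.F g).map (homW h) ≫ zeta Pi g (m * g⁻¹) m (inv_mul_cancel_right m g) := by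
            rw [Category.assoc, hom_Pi g m]
        _ = (act.F g).map (homW h ≫ Pi (m * g⁻¹)) ≫ (act.δ g (m * g⁻¹)).hom.app Y ≫
            eqToHom (congrArg (fun t => (act.F t).obj Y) (inv_mul_cancel_right m g)) := by
            rw [zeta, Functor.map_comp]
            simp only [Category.assoc]
        _ = (act.F g).map (zeta Pi h (m * g⁻¹ * h⁻¹) (m * g⁻¹)
              (inv_mul_cancel_right (m * g⁻¹) h)) ≫ (act.δ g (m * g⁻¹)).hom.app Y ≫
            eqToHom (congrArg (fun t => (act.F t).obj Y) (inv_mul_cancel_right m g)) := by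
            rw [hom_Pi h]
        _ = zeta2 Pi g h (m * g⁻¹ * h⁻¹) m pfA :=
            map_zeta Pi g h _ _ m (inv_mul_cancel_right (m * g⁻¹) h) (inv_mul_cancel_right m g)
        _ = zeta2 Pi g h (m * (h * g)⁻¹) m pfB :=
            zeta2_congr Pi (by rw [mul_inv_rev, ← mul_assoc]) pfA pfB
        _ = (act.δ g h).hom.app W₀ ≫ zeta Pi (h * g) (m * (h * g)⁻¹) m
              (inv_mul_cancel_right m (h * g)) := (zeta_push Pi g h _ m _).symm
        _ = (act.δ g h).hom.app W₀ ≫ homW (h * g) ≫ Pi m := by rw [hom_Pi (h * g) m]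
        _ = ((act.δ g h).hom.app W₀ ≫ homW (h * g)) ≫ Pi m := by rw [Category.assoc]
  have hom1 : homW 1 = unitHom act W₀ := by
    apply Wext
    · rw [hom_p 1, ← unit_lam ZH, unit_natural act p₀]
    · intro m
      rw [hom_Pi 1 m,
        zeta_congr Pi (show m * (1 : G)⁻¹ = m by rw [inv_one, mul_one])
          (inv_mul_cancel_right m 1) (mul_one m), zeta_one, unit_natural act (Pi m)]
  obtain ⟨homInv, hhomInv, hInvhom⟩ := make_iso W₀ homW compat hom1
  set W : EqObj act := ⟨W₀, fun h => ⟨homW h, homInv h, hhomInv h, hInvhom h⟩, compat⟩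
    with hW
  have lamPi : ∀ h g : G, (W.lam h).hom ≫ Pi (g * h) =
      (act.F h).map (Pi g) ≫ (act.δ h g).hom.app Y := by
    intro h g
    have : (W.lam h).hom = homW h := rfl
    rw [this, hom_Pi h (g * h),
      zeta_congr Pi (mul_inv_cancel_right g h) (inv_mul_cancel_right (g * h) h) rfl,
      zeta_plain]
  refine ⟨ZH, P, J, W, ⟨p₀, fun h => (hom_p h).symm⟩, Pi, hJP, hJP0, hJlam,
    deflation_lift hadm _ hp₀, hcomp', lamPi, ?_⟩
  intro T t y hy
  obtain ⟨w, ⟨hw1, hw2⟩, -⟩ := huniv T t y (fun g _ => hy g)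
    (fun g hg => absurd (Finset.mem_univ g) hg)
  exact ⟨w, hw1, hw2⟩

end Master

section FinalDirections

set_option linter.unusedSectionVars false

variable {act : GAction G A} [∀ g : G, (act.F g).Additive] {E : ExactStructure A} [Fintype G]

lemma unit_inv_natural (act : GAction G A) {X Y : A} (u : X ⟶ Y) :
    haveI : IsIso (unitHom act X) := unit_isIso act X
    haveI : IsIso (unitHom act Y) := unit_isIso act Y
    inv (unitHom act X) ≫ (act.F (1 : G)).map u = u ≫ inv (unitHom act Y) := by
  haveI : IsIso (unitHom act X) := unit_isIso act X
  haveI : IsIso (unitHom act Y) := unit_isIso act Y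
  rw [IsIso.inv_comp_eq, ← Category.assoc, ← unit_natural act u, Category.assoc,
    IsIso.hom_inv_id, Category.comp_id]

lemma underlying_proj (hadm : ∀ (g : G), ∀ c ∈ E.conflations, c.map (act.F g) ∈ E.conflations)
    (P : EqObj act) (hP : IsProjectiveIn (Sconf act E) P) :
    IsProjectiveIn E.conflations P.obj := by
  intro Y Z d hd f
  obtain ⟨X, i, hc⟩ := hd
  obtain ⟨ZH, PZ, JZ, W, p, Pi, hJP, hJP0, hJlam, hpS, hPi, lamPi, huniv⟩ :=
    master (act := act) hadm hc
  set fhat : P.obj ⟶ ZH.obj := ∑ g : G, (P.lam g).inv ≫ (act.F g).map f ≫ JZ g with hfhat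
  have fhat_comm : ∀ h : G,
      (act.F h).map fhat ≫ (ZH.lam h).hom = (P.lam h).hom ≫ fhat := by
    intro h
    rw [hfhat, Functor.map_sum, Preadditive.sum_comp, Preadditive.comp_sum]
    refine Fintype.sum_equiv (Equiv.mulRight h) _ _ (fun g => ?_)
    simp only [Equiv.coe_mulRight]
    rw [Functor.map_comp, Functor.map_comp]
    calc ((act.F h).map (P.lam g).inv ≫ (act.F h).map ((act.F g).map f) ≫
            (act.F h).map (JZ g)) ≫ (ZH.lam h).hom
        = (act.F h).map (P.lam g).inv ≫ (act.F h).map ((act.F g).map f) ≫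
            ((act.F h).map (JZ g) ≫ (ZH.lam h).hom) := by simp only [Category.assoc]
      _ = (act.F h).map (P.lam g).inv ≫ (act.F h).map ((act.F g).map f) ≫
            (act.δ h g).hom.app Z ≫ JZ (g * h) := by rw [hJlam h g]
      _ = (act.F h).map (P.lam g).inv ≫ ((act.δ h g).hom.app P.obj ≫
            (act.F (g * h)).map f) ≫ JZ (g * h) := by
          rw [← Category.assoc ((act.F h).map ((act.F g).map f)),
            ← (act.δ h g).hom.naturality f]
          simp only [Category.assoc]
          rfl
      _ = ((act.F h).map (P.lam g).inv ≫ (act.δ h g).hom.app P.obj) ≫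
            (act.F (g * h)).map f ≫ JZ (g * h) := by simp only [Category.assoc]
      _ = ((P.lam h).hom ≫ (P.lam (g * h)).inv) ≫ (act.F (g * h)).map f ≫ JZ (g * h) := by
          rw [compat_inv P h g]
      _ = (P.lam h).hom ≫ (P.lam (g * h)).inv ≫ (act.F (g * h)).map f ≫ JZ (g * h) := by
          simp only [Category.assoc]
  obtain ⟨l, hl⟩ := hP p hpS ⟨fhat, fhat_comm⟩
  have hlf : l.f ≫ p.f = fhat := by simpa using congrArg EqObj.EqHom.f hl
  refine ⟨l.f ≫ Pi 1 ≫ unitHom act Y, ?_⟩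
  have hfP1 : fhat ≫ PZ 1 = (P.lam 1).inv ≫ (act.F (1 : G)).map f := by
    rw [hfhat, Preadditive.sum_comp]
    rw [Finset.sum_eq_single 1]
    · rw [Category.assoc, Category.assoc, hJP 1, Category.comp_id]
    · intro g _ hg
      rw [Category.assoc, Category.assoc, hJP0 g 1 hg, comp_zero, comp_zero]
    · intro hm
      exact absurd (Finset.mem_univ _) hm
  calc (l.f ≫ Pi 1 ≫ unitHom act Y) ≫ d
      = l.f ≫ Pi 1 ≫ unitHom act Y ≫ d := by simp only [Category.assoc]
    _ = l.f ≫ Pi 1 ≫ (act.F (1 : G)).map d ≫ unitHom act Z := by rw [unit_natural act d]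
    _ = l.f ≫ (Pi 1 ≫ (act.F (1 : G)).map d) ≫ unitHom act Z := by
        simp only [Category.assoc]
    _ = l.f ≫ (p.f ≫ PZ 1) ≫ unitHom act Z := by rw [hPi 1]
    _ = (l.f ≫ p.f) ≫ PZ 1 ≫ unitHom act Z := by simp only [Category.assoc]
    _ = (fhat ≫ PZ 1) ≫ unitHom act Z := by rw [hlf, Category.assoc]
    _ = (P.lam 1).inv ≫ (act.F (1 : G)).map f ≫ unitHom act Z := by
        rw [hfP1, Category.assoc]
    _ = (P.lam 1).inv ≫ unitHom act P.obj ≫ f := by rw [unit_natural act f]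
    _ = (P.lam 1).inv ≫ (P.lam 1).hom ≫ f := by rw [unit_lam P]
    _ = f := by rw [Iso.inv_hom_id_assoc]

lemma underlying_inj (hadm : ∀ (g : G), ∀ c ∈ E.conflations, c.map (act.F g) ∈ E.conflations)
    (I : EqObj act) (hI : IsInjectiveIn (Sconf act E) I) :
    IsInjectiveIn E.conflations I.obj := by
  classical
  intro X Y i hi f
  obtain ⟨Z, d, hc⟩ := hi
  obtain ⟨ZH, PZ, JZ, W, p, Pi, hJP, hJP0, hJlam, hpS, hPi, lamPi, huniv⟩ :=
    master (act := act) hadm hc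
  obtain ⟨K, k, hKmem⟩ := hpS
  have hKE : Conflation.mk K.obj W.obj ZH.obj k.f p.f ∈ E.conflations := hKmem.2
  have hkp0 : k.f ≫ p.f = 0 := conf_w hKE
  have hcg : ∀ g : G, Conflation.mk ((act.F g).obj X) ((act.F g).obj Y) ((act.F g).obj Z)
      ((act.F g).map i) ((act.F g).map d) ∈ E.conflations := fun g => hadm g _ hc
  haveI : ∀ g : G, Mono ((act.F g).map i) := fun g => conf_mono (hcg g)
  have hq0 : ∀ g : G, (k.f ≫ Pi g) ≫ (act.F g).map d = 0 := by
    intro g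
    rw [Category.assoc, hPi g, ← Category.assoc, hkp0, zero_comp]
  set q : ∀ g : G, K.obj ⟶ (act.F g).obj X := fun g => kerLift (hcg g) (k.f ≫ Pi g) (hq0 g)
    with hqdef
  have hqi : ∀ g, q g ≫ (act.F g).map i = k.f ≫ Pi g := fun g => kerLift_i (hcg g) _ _
  have hqlam : ∀ h g : G, (K.lam h).hom ≫ q (g * h) =
      (act.F h).map (q g) ≫ (act.δ h g).hom.app X := by
    intro h g
    rw [← cancel_mono ((act.F (g * h)).map i)]
    calc ((K.lam h).hom ≫ q (g * h)) ≫ (act.F (g * h)).map i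
        = (K.lam h).hom ≫ k.f ≫ Pi (g * h) := by rw [Category.assoc, hqi (g * h)]
      _ = ((act.F h).map k.f ≫ (W.lam h).hom) ≫ Pi (g * h) := by
          rw [← Category.assoc, ← k.comm h]
      _ = (act.F h).map k.f ≫ (act.F h).map (Pi g) ≫ (act.δ h g).hom.app Y := by
          rw [Category.assoc, lamPi h g]
      _ = (act.F h).map (q g ≫ (act.F g).map i) ≫ (act.δ h g).hom.app Y := by
          rw [← Category.assoc, ← Functor.map_comp, ← hqi g]
      _ = (act.F h).map (q g) ≫ (act.F h).map ((act.F g).map i) ≫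
          (act.δ h g).hom.app Y := by rw [Functor.map_comp, Category.assoc]
      _ = (act.F h).map (q g) ≫ (act.δ h g).hom.app X ≫ (act.F (g * h)).map i := by
          rw [← (act.δ h g).hom.naturality i]
          rfl
      _ = ((act.F h).map (q g) ≫ (act.δ h g).hom.app X) ≫ (act.F (g * h)).map i := by
          rw [Category.assoc]
  set phi0 : K.obj ⟶ I.obj := ∑ g : G, q g ≫ (act.F g).map f ≫ (I.lam g).hom with hphi
  have phi_comm : ∀ h : G,
      (act.F h).map phi0 ≫ (I.lam h).hom = (K.lam h).hom ≫ phi0 := by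
    intro h
    rw [hphi, Functor.map_sum, Preadditive.sum_comp, Preadditive.comp_sum]
    refine Fintype.sum_equiv (Equiv.mulRight h) _ _ (fun g => ?_)
    simp only [Equiv.coe_mulRight]
    rw [Functor.map_comp, Functor.map_comp]
    calc ((act.F h).map (q g) ≫ (act.F h).map ((act.F g).map f) ≫
            (act.F h).map (I.lam g).hom) ≫ (I.lam h).hom
        = (act.F h).map (q g) ≫ (act.F h).map ((act.F g).map f) ≫
            ((act.F h).map (I.lam g).hom ≫ (I.lam h).hom) := by simp only [Category.assoc]
      _ = (act.F h).map (q g) ≫ (act.F h).map ((act.F g).map f) ≫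
            (act.δ h g).hom.app I.obj ≫ (I.lam (g * h)).hom := by rw [I.compat h g]
      _ = (act.F h).map (q g) ≫ ((act.δ h g).hom.app X ≫ (act.F (g * h)).map f) ≫
            (I.lam (g * h)).hom := by
          rw [← Category.assoc ((act.F h).map ((act.F g).map f)),
            ← (act.δ h g).hom.naturality f]
          simp only [Category.assoc]
          rfl
      _ = ((act.F h).map (q g) ≫ (act.δ h g).hom.app X) ≫ (act.F (g * h)).map f ≫
            (I.lam (g * h)).hom := by simp only [Category.assoc]
      _ = ((K.lam h).hom ≫ q (g * h)) ≫ (act.F (g * h)).map f ≫ (I.lam (g * h)).hom := by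
          rw [hqlam h g]
      _ = (K.lam h).hom ≫ q (g * h) ≫ (act.F (g * h)).map f ≫ (I.lam (g * h)).hom := by
          simp only [Category.assoc]
  obtain ⟨ρ, hρ⟩ := hI k ⟨ZH, p, hKmem⟩ ⟨phi0, phi_comm⟩
  have hρf : k.f ≫ ρ.f = phi0 := by simpa using congrArg EqObj.EqHom.f hρ
  haveI : IsIso (unitHom act Y) := unit_isIso act Y
  haveI : IsIso (unitHom act Z) := unit_isIso act Z
  haveI : IsIso (unitHom act X) := unit_isIso act X
  set yb : ∀ g : G, Y ⟶ (act.F g).obj Y := fun g => if e : g = 1 then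
    inv (unitHom act Y) ≫ eqToHom (congrArg (fun t => (act.F t).obj Y) e.symm) else 0
    with hyb
  set tb : Y ⟶ ZH.obj := d ≫ inv (unitHom act Z) ≫ JZ 1 with htb
  have cond : ∀ g : G, yb g ≫ (act.F g).map d = tb ≫ PZ g := by
    intro g
    rw [hyb, htb]
    beta_reduce
    by_cases e : g = 1
    · subst e
      rw [dif_pos rfl, eqToHom_self, Category.comp_id]
      simp only [Category.assoc]
      rw [hJP 1, Category.comp_id]
      exact unit_inv_natural act d
    · rw [dif_neg e, zero_comp]
      simp only [Category.assoc]
      rw [hJP0 1 g (fun h' => e h'.symm), comp_zero, comp_zero]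
  obtain ⟨b, hbp, hbPi⟩ := huniv Y tb yb cond
  have hτp : (i ≫ b) ≫ p.f = 0 := by
    rw [Category.assoc, hbp, htb, ← Category.assoc, conf_w hc, zero_comp]
  set σ : X ⟶ K.obj := kerLift hKE (i ≫ b) hτp with hσ
  have hσk : σ ≫ k.f = i ≫ b := kerLift_i hKE _ _
  have hσq1 : σ ≫ q 1 = inv (unitHom act X) := by
    rw [← cancel_mono ((act.F (1 : G)).map i), Category.assoc, hqi 1, ← Category.assoc,
      hσk, Category.assoc, hbPi 1, hyb]
    beta_reduce
    rw [dif_pos rfl, eqToHom_self, Category.comp_id]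
    exact (unit_inv_natural act i).symm
  have hσq0 : ∀ g : G, g ≠ 1 → σ ≫ q g = 0 := by
    intro g hg
    rw [← cancel_mono ((act.F g).map i), Category.assoc, hqi g, ← Category.assoc, hσk,
      Category.assoc, hbPi g, hyb, zero_comp]
    beta_reduce
    rw [dif_neg hg, comp_zero]
  refine ⟨b ≫ ρ.f, ?_⟩
  calc i ≫ b ≫ ρ.f = (σ ≫ k.f) ≫ ρ.f := by rw [hσk, Category.assoc]
    _ = σ ≫ phi0 := by rw [Category.assoc, hρf]
    _ = inv (unitHom act X) ≫ (act.F (1 : G)).map f ≫ (I.lam 1).hom := by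
        rw [hphi, Preadditive.comp_sum]
        rw [Finset.sum_eq_single 1]
        · rw [← Category.assoc, hσq1]
        · intro g _ hg
          rw [← Category.assoc, hσq0 g hg, zero_comp]
        · intro hm
          exact absurd (Finset.mem_univ _) hm
    _ = inv (unitHom act X) ≫ (act.F (1 : G)).map f ≫ unitHom act I.obj := by
        rw [unit_lam I]
    _ = inv (unitHom act X) ≫ unitHom act X ≫ f := by rw [unit_natural act f]
    _ = f := by rw [IsIso.inv_hom_id_assoc]

end FinalDirections

end EquivariantProofs

/-- Let `E` be an exact structure on `A` and let `G` act admissibly (each `F_g` is exact).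
Then the kernel-cokernel pairs in `A^G` whose image under the forgetful functor `ω` is a
conflation in `A` form the unique maximal exact structure on `A^G` making `ω` exact.
If `|G|` is invertible in `A`, then `Proj(A^G) = (Proj A)^G` and `Inj(A^G) = (Inj A)^G`. -/
theorem equivariant_exact_structure
    [Preadditive A] [Fintype G] (act : GAction G A) [∀ g : G, (act.F g).Additive]
    (E : ExactStructure A)
    (hadm : ∀ (g : G), ∀ c ∈ E.conflations, c.map (act.F g) ∈ E.conflations) :
    (∃ EG : ExactStructure (EqObj act),
      EG.conflations = {c : Conflation (EqObj act) |
        IsKerCokerPair c ∧ c.map (EqObj.forget act) ∈ E.conflations}) ∧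
    (∀ E' : ExactStructure (EqObj act),
      (∀ c ∈ E'.conflations, c.map (EqObj.forget act) ∈ E.conflations) →
      E'.conflations ⊆ {c : Conflation (EqObj act) |
        IsKerCokerPair c ∧ c.map (EqObj.forget act) ∈ E.conflations}) ∧
    (NatInvertibleIn (Fintype.card G) A →
      (∀ P : EqObj act,
        IsProjectiveIn {c : Conflation (EqObj act) |
          IsKerCokerPair c ∧ c.map (EqObj.forget act) ∈ E.conflations} P ↔
        IsProjectiveIn E.conflations P.obj) ∧
      (∀ I : EqObj act,
        IsInjectiveIn {c : Conflation (EqObj act) |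
          IsKerCokerPair c ∧ c.map (EqObj.forget act) ∈ E.conflations} I ↔
        IsInjectiveIn E.conflations I.obj)) := by
  refine ⟨⟨{ conflations := Sconf act E
             kerCoker := fun c hc => hc.1
             iso_closed := fun c hc c' h => S_iso_closed hc c' h
             ex0 := S_ex0 hadm
             ex1 := fun d d' h h' => S_ex1 hadm d d' h h'
             ex2 := fun d hd f => S_ex2 hadm d hd f
             ex2op := fun i hi h => S_ex2op hadm i hi h }, rfl⟩,
    fun E' hE' c hc => ⟨E'.kerCoker c hc, hE' c hc⟩,
    fun hinv => ⟨fun P => ⟨fun h => underlying_proj hadm P h,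
        fun h => proj_of_underlying hinv P h⟩,
      fun I => ⟨fun h => underlying_inj hadm I h,
        fun h => inj_of_underlying hinv I h⟩⟩⟩
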